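/- arXiv:2010.07362 — 7 statements merged into one kernel-verified Lean document; each statement's English description precedes it below -/
import Mathlib

section
/- Let k → B be a ℚ-algebra embedding of a quadratic field k into a quaternion algebra B over ℚ. Then there exists an element j ∈ B^× such that a·j = j·ā for all a ∈ k (where ā denotes the image of a under the nontrivial automorphism of k); such an element j is unique up to multiplication by k^×; and any such j satisfies j² ∈ ℚ^× and yields a direct sum decomposition B = k ⊕ k·j of ℚ-vector spaces. -/
lemma aux_quad {k : Type} [Field k] [Algebra ℚ k] (hk2 : Module.finrank ℚ k = 2)
    (σ : k ≃ₐ[ℚ] k) (hσ : σ ≠ AlgEquiv.refl) :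
    ∃ β : k, β ≠ 0 ∧ σ β = -β ∧ (∃ d : ℚ, β ^ 2 = algebraMap ℚ k d) ∧
      ∀ a : k, ∃ x y : ℚ, a = algebraMap ℚ k x + y • β := by
  haveI : FiniteDimensional ℚ k := FiniteDimensional.of_finrank_pos (by rw [hk2]; norm_num)
  obtain ⟨α, hα⟩ : ∃ α : k, σ α ≠ α := by
    by_contra h
    push_neg at h
    exact hσ (AlgEquiv.ext fun a => h a)
  have hαQ : ∀ x : ℚ, α ≠ algebraMap ℚ k x := by
    intro x hx
    exact hα (by rw [hx, AlgEquiv.commutes])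
  have hdep : ¬ LinearIndependent ℚ ![1, α, α ^ 2] := by
    intro h
    have := h.fintype_card_le_finrank
    simp [hk2] at this
  rw [Fintype.not_linearIndependent_iff] at hdep
  obtain ⟨g, hsum, i0, hi0⟩ := hdep
  rw [Fin.sum_univ_three] at hsum
  simp only [Matrix.cons_val_zero, Matrix.cons_val_one, Matrix.head_cons,
    Matrix.cons_val_two, Matrix.tail_cons] at hsum
  have hg2 : g 2 ≠ 0 := by
    intro hg2
    rw [hg2, zero_smul, add_zero] at hsum
    have hg1 : g 1 = 0 := by
      by_contra hg1
      apply hαQ ((g 1)⁻¹ * (-(g 0)))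
      have h1 : g 1 • α = (-(g 0)) • (1 : k) := by
        rw [neg_smul]; linear_combination (norm := module) hsum
      have h2 := congrArg (fun z => (g 1)⁻¹ • z) h1
      simp only [smul_smul, inv_mul_cancel₀ hg1, one_smul] at h2
      rw [h2, Algebra.algebraMap_eq_smul_one]
    rw [hg1, zero_smul, add_zero, smul_eq_zero] at hsum
    rcases hsum with h | h
    · fin_cases i0 <;> simp_all
    · exact one_ne_zero h
  -- α ^ 2 = b • α + c • 1
  set b : ℚ := (g 2)⁻¹ * (-(g 1)) with hbdef
  set c : ℚ := (g 2)⁻¹ * (-(g 0)) with hcdef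
  have hα2 : α ^ 2 = algebraMap ℚ k b * α + algebraMap ℚ k c := by
    have h1 : g 2 • α ^ 2 = (-(g 1)) • α + (-(g 0)) • (1 : k) := by
      simp only [neg_smul]; linear_combination (norm := module) hsum
    have h2 := congrArg (fun z => (g 2)⁻¹ • z) h1
    simp only [smul_smul, inv_mul_cancel₀ hg2, one_smul] at h2
    have h3 : α ^ 2 = ((g 2)⁻¹ * -(g 1)) • α + ((g 2)⁻¹ * -(g 0)) • (1 : k) := by
      rw [h2]; module
    rw [h3, Algebra.smul_def, Algebra.smul_def, mul_one]
  have hσα2 : (σ α) ^ 2 = algebraMap ℚ k b * σ α + algebraMap ℚ k c := by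
    have := congrArg σ hα2
    simpa only [map_pow, map_add, map_mul, AlgEquiv.commutes] using this
  have htr : α + σ α = algebraMap ℚ k b := by
    have hne : α - σ α ≠ 0 := sub_ne_zero.mpr (Ne.symm hα)
    have key : (α - σ α) * (α + σ α - algebraMap ℚ k b) = 0 := by
      linear_combination hα2 - hσα2
    rcases mul_eq_zero.mp key with h | h
    · exact absurd h hne
    · linear_combination h
  have h2k : (2 : k) ≠ 0 := by
    rw [← map_ofNat (algebraMap ℚ k) 2, map_ne_zero_iff _ (algebraMap ℚ k).injective]
    norm_num
  clear_value b c
  refine ⟨2 * α - algebraMap ℚ k b, ?_, ?_, ?_, ?_⟩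
  · intro h0
    apply hα
    have hσa : σ α = algebraMap ℚ k b - α := by linear_combination htr
    have hab : (2 : k) * α = algebraMap ℚ k b := by
      have : ((2:ℚ):k) = (2:k) := by norm_num
      linear_combination h0
    rw [hσa, ← hab]; ring
  · have hσa : σ α = algebraMap ℚ k b - α := by linear_combination htr
    rw [map_sub, map_mul, hσa, AlgEquiv.commutes, map_ofNat]
    ring
  · refine ⟨b ^ 2 + 4 * c, ?_⟩
    rw [map_add, map_pow, map_mul, map_ofNat]
    linear_combination (4 : k) * hα2
  · intro a
    -- 1 and β := 2α - b are linearly independent, hence a basis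
    set β : k := 2 * α - algebraMap ℚ k b with hβdef
    have hβ0 : β ≠ 0 := by
      intro h0
      apply hα
      have hσa : σ α = algebraMap ℚ k b - α := by linear_combination htr
      have hab : (2 : k) * α = algebraMap ℚ k b := by linear_combination h0
      rw [hσa, ← hab]; ring
    have hσβ : σ β = -β := by
      have hσa : σ α = algebraMap ℚ k b - α := by linear_combination htr
      rw [hβdef, map_sub, map_mul, hσa, AlgEquiv.commutes, map_ofNat]
      ring
    have hli : LinearIndependent ℚ ![(1 : k), β] := by
      rw [LinearIndependent.pair_iff]
      intro s t hst
      have h1 : algebraMap ℚ k s + t • β = 0 := by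
        rw [Algebra.algebraMap_eq_smul_one]; linear_combination (norm := module) hst
      have h2 : algebraMap ℚ k s - t • β = 0 := by
        have := congrArg σ h1
        simp only [map_add, AlgEquiv.commutes, map_smul, hσβ, map_zero] at this
        linear_combination (norm := module) this
      have hs : algebraMap ℚ k s = 0 := by
        have h3 : (2:k) * algebraMap ℚ k s = 0 := by linear_combination h1 + h2
        rcases mul_eq_zero.mp h3 with h | h
        · exact absurd h h2k
        · exact h
      have hs0 : s = 0 := by
        rwa [map_eq_zero_iff _ (algebraMap ℚ k).injective] at hs
      refine ⟨hs0, ?_⟩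
      rw [hs, zero_add] at h1
      rcases smul_eq_zero.mp h1 with h | h
      · exact h
      · exact absurd h hβ0
    have hspan := hli.span_eq_top_of_card_eq_finrank (by simp [hk2])
    have hmem : a ∈ Submodule.span ℚ (Set.range ![(1 : k), β]) := by
      rw [hspan]; trivial
    have hrange : Set.range ![(1 : k), β] = {(1 : k), β} := by
      ext z
      simp [Matrix.range_cons, Matrix.range_empty, Set.insert_def, or_comm]
    rw [hrange, Submodule.mem_span_pair] at hmem
    obtain ⟨x, y, hxy⟩ := hmem
    exact ⟨x, y, by rw [← hxy, Algebra.algebraMap_eq_smul_one]⟩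


lemma aux_bij {k B : Type} [Field k] [Algebra ℚ k] [Ring B] [Algebra ℚ B]
    (hk2 : Module.finrank ℚ k = 2) (hB4 : Module.finrank ℚ B = 4)
    (ι : k →ₐ[ℚ] B) (hι : Function.Injective ι)
    (β : k) (hβ : β ≠ 0)
    (j : B) (hj : j ≠ 0) (hanti : ι β * j = -(j * ι β)) :
    Function.Bijective (fun p : k × k => ι p.1 + ι p.2 * j) := by
  haveI : FiniteDimensional ℚ k := FiniteDimensional.of_finrank_pos (by rw [hk2]; norm_num)
  haveI : FiniteDimensional ℚ B := FiniteDimensional.of_finrank_pos (by rw [hB4]; norm_num)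
  -- a cancellation helper : w * ι β = 0 → w = 0
  have hcancel : ∀ w : B, w * ι β = 0 → w = 0 := by
    intro w hw
    have : w * (ι β * ι β⁻¹) = 0 := by rw [← mul_assoc, hw, zero_mul]
    rwa [← map_mul, mul_inv_cancel₀ hβ, map_one, mul_one] at this
  set L : (k × k) →ₗ[ℚ] B :=
    { toFun := fun p => ι p.1 + ι p.2 * j
      map_add' := by
        intro p q
        simp only [Prod.fst_add, Prod.snd_add, map_add, add_mul]
        abel
      map_smul' := by
        intro s p
        simp only [Prod.smul_fst, Prod.smul_snd, map_smul, RingHom.id_apply, smul_add,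
          smul_mul_assoc] } with hLdef
  have hinj : Function.Injective L := by
    rw [← LinearMap.ker_eq_bot, LinearMap.ker_eq_bot']
    intro p hp
    have hp' : ι p.1 + ι p.2 * j = 0 := hp
    -- multiply the relation with ι β on both sides
    have e1 : ι β * (ι p.2 * j) = -((ι p.2 * j) * ι β) := by
      rw [← mul_assoc, ← map_mul, mul_comm β p.2, map_mul, mul_assoc, hanti,
        mul_neg, mul_assoc]
    have e2 : ι p.1 = -(ι p.2 * j) := eq_neg_of_add_eq_zero_left hp'
    have e3 : ι β * ι p.1 = ι p.1 * ι β := by rw [← map_mul, ← map_mul, mul_comm]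
    have e4 : ι β * ι p.1 = -(ι p.1 * ι β) := by
      rw [e2, mul_neg, e1, neg_neg, neg_mul, neg_neg]
    have e45 : ι p.1 * ι β = -(ι p.1 * ι β) := e3.symm.trans e4
    have e5 : (2 : ℚ) • (ι p.1 * ι β) = 0 := by
      rw [two_smul]
      nth_rewrite 1 [e45]
      exact neg_add_cancel _
    have e6 : ι p.1 * ι β = 0 := by
      rcases smul_eq_zero.mp e5 with h | h
      · norm_num at h
      · exact h
    have hp1 : p.1 = 0 := by
      have := hcancel _ e6
      exact hι (by rw [this, map_zero])
    have hp2 : p.2 = 0 := by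
      rw [hp1, map_zero, zero_add] at hp'
      by_contra hne
      have : ι p.2⁻¹ * (ι p.2 * j) = 0 := by rw [hp', mul_zero]
      rw [← mul_assoc, ← map_mul, inv_mul_cancel₀ hne, map_one, one_mul] at this
      exact hj this
    exact Prod.ext hp1 hp2
  have hrank : Module.finrank ℚ (k × k) = Module.finrank ℚ B := by
    rw [Module.finrank_prod, hk2, hB4]
  have hsurj : Function.Surjective L := by
    intro b
    refine ⟨(LinearMap.linearEquivOfInjective L hinj hrank).symm b, ?_⟩
    have := LinearMap.linearEquivOfInjective_apply (f := L) hinj hrank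
      ((LinearMap.linearEquivOfInjective L hinj hrank).symm b)
    rw [← this, LinearEquiv.apply_symm_apply]
  exact ⟨hinj, hsurj⟩

/- STATEMENT 0: Let k → B be a ℚ-algebra embedding of a quadratic field k into a
quaternion algebra B over ℚ (a central simple ℚ-algebra of dimension 4).  Then there
exists j ∈ Bˣ with a·j = j·ā for all a ∈ k (ā the image of a under the nontrivial
automorphism of k); such a j is unique up to multiplication by k^×; and any such j
satisfies j² ∈ ℚ^× and yields a direct sum decomposition B = k ⊕ k·j. -/

theorem statement0
    (k : Type) [Field k] [Algebra ℚ k] (hk2 : Module.finrank ℚ k = 2)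
    (σ : k ≃ₐ[ℚ] k) (hσ : σ ≠ AlgEquiv.refl)
    (B : Type) [Ring B] [Algebra ℚ B]
    (hB4 : Module.finrank ℚ B = 4)
    [Algebra.IsCentral ℚ B] [IsSimpleRing B]
    (ι : k →ₐ[ℚ] B) (hι : Function.Injective ι) :
    (∃ j : Bˣ, ∀ a : k, ι a * (j : B) = (j : B) * ι (σ a)) ∧
    (∀ j j' : Bˣ, (∀ a : k, ι a * (j : B) = (j : B) * ι (σ a)) →
      (∀ a : k, ι a * (j' : B) = (j' : B) * ι (σ a)) →
      ∃ c : kˣ, (j' : B) = ι (c : k) * (j : B)) ∧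
    (∀ j : Bˣ, (∀ a : k, ι a * (j : B) = (j : B) * ι (σ a)) →
      (∃ q : ℚ, q ≠ 0 ∧ (j : B) ^ 2 = algebraMap ℚ B q) ∧
      Function.Bijective (fun p : k × k => ι p.1 + ι p.2 * (j : B))) := by
  haveI : FiniteDimensional ℚ B := FiniteDimensional.of_finrank_pos (by rw [hB4]; norm_num)
  haveI : Nontrivial B := Module.nontrivial_of_finrank_pos (R := ℚ)
    (show 0 < Module.finrank ℚ B by rw [hB4]; norm_num)
  obtain ⟨β, hβ0, hσβ, ⟨d, hβ2⟩, hspan⟩ := aux_quad hk2 σ hσ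
  have h2k : (2 : k) ≠ 0 := by
    rw [← map_ofNat (algebraMap ℚ k) 2, map_ne_zero_iff _ (algebraMap ℚ k).injective]
    norm_num
  have hσform : ∀ x y : ℚ, σ (algebraMap ℚ k x + y • β) = algebraMap ℚ k x - y • β := by
    intro x y
    rw [map_add, AlgEquiv.commutes, map_smul, hσβ]; module
  have hσσ : ∀ a : k, σ (σ a) = a := by
    intro a
    obtain ⟨x, y, rfl⟩ := hspan a
    rw [hσform, map_sub, AlgEquiv.commutes, map_smul, hσβ]; module
  have hfix : ∀ c : k, σ c = c → ∃ q : ℚ, c = algebraMap ℚ k q := by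
    intro c hc
    obtain ⟨x, y, rfl⟩ := hspan c
    rw [hσform, sub_eq_add_neg] at hc
    have h2 := add_left_cancel hc
    have h3 : (2 : k) * (y • β) = 0 := by
      rw [two_mul]
      nth_rewrite 1 [← h2]
      exact neg_add_cancel _
    rcases mul_eq_zero.mp h3 with h | h
    · exact absurd h h2k
    · rcases smul_eq_zero.mp h with h' | h'
      · exact ⟨x, by rw [h', zero_smul, add_zero]⟩
      · exact absurd h' hβ0
  have hιform : ∀ x y : ℚ, ι (algebraMap ℚ k x + y • β) = algebraMap ℚ B x + y • ι β := by
    intro x y; rw [map_add, AlgHom.commutes, map_smul]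
  have hιform' : ∀ x y : ℚ, ι (algebraMap ℚ k x - y • β) = algebraMap ℚ B x - y • ι β := by
    intro x y; rw [map_sub, AlgHom.commutes, map_smul]
  have hrel_of_anti : ∀ j : B, ι β * j = -(j * ι β) → ∀ a : k, ι a * j = j * ι (σ a) := by
    intro j hanti a
    obtain ⟨x, y, rfl⟩ := hspan a
    rw [hσform, hιform, hιform', add_mul, mul_sub, smul_mul_assoc, hanti,
      Algebra.commutes, smul_neg, ← sub_eq_add_neg, mul_smul_comm]
  have hanti_of_rel : ∀ j : B, (∀ a : k, ι a * j = j * ι (σ a)) → ι β * j = -(j * ι β) := by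
    intro j hrel
    rw [hrel β, hσβ, map_neg, mul_neg]
  have hswap : ∀ j : B, (∀ a : k, ι a * j = j * ι (σ a)) → ∀ a : k, j * ι a = ι (σ a) * j := by
    intro j hrel a
    rw [hrel (σ a), hσσ]
  -- expansion helpers
  have hexp : ∀ (j : B) (u v : k), ι β * (ι u + ι v * j) = ι (β * u) + ι (β * v) * j := by
    intro j u v
    rw [mul_add, ← map_mul, ← mul_assoc, ← map_mul]
  have hexp' : ∀ j : B, (∀ a : k, ι a * j = j * ι (σ a)) → ∀ u v : k,
      (ι u + ι v * j) * ι β = ι (u * β) + ι (-(v * β)) * j := by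
    intro j hrel u v
    have h1 : ι v * (j * ι β) = ι (-(v * β)) * j := by
      rw [hswap j hrel β, hσβ, ← mul_assoc, ← map_mul, mul_neg]
    rw [add_mul, ← map_mul, mul_assoc, h1]
  -- cancellation by a nonzero element of k
  have hcank : ∀ (c : k) (j : B), c ≠ 0 → ι c * j = 0 → j = 0 := by
    intro c j hc h
    have h1 : ι c⁻¹ * (ι c * j) = 0 := by rw [h, mul_zero]
    rwa [← mul_assoc, ← map_mul, inv_mul_cancel₀ hc, map_one, one_mul] at h1
  -- square of an anticommuting element is a rational scalar
  have hsq : ∀ j : B, j ≠ 0 → (∀ a : k, ι a * j = j * ι (σ a)) →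
      ∃ q : ℚ, j * j = algebraMap ℚ B q := by
    intro j hj hrel
    have hbij := aux_bij hk2 hB4 ι hι β hβ0 j hj (hanti_of_rel j hrel)
    obtain ⟨p, hp⟩ := hbij.2 (j * j)
    simp only at hp
    have hc1 : ι β * (j * j) = (j * j) * ι β := by
      rw [← mul_assoc, hrel β, mul_assoc, hrel (σ β), ← mul_assoc, hσσ]
    have h1 : ι (β * p.1) + ι (β * p.2) * j = ι (p.1 * β) + ι (-(p.2 * β)) * j := by
      rw [← hexp j p.1 p.2, ← hexp' j hrel p.1 p.2, hp, hc1]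
    have h2 := hbij.1 (a₁ := (β * p.1, β * p.2)) (a₂ := (p.1 * β, -(p.2 * β))) h1
    have hcoord : β * p.2 = -(p.2 * β) := congrArg Prod.snd h2
    have hp2 : p.2 = 0 := by
      have h3 : (2 : k) * (p.2 * β) = 0 := by linear_combination hcoord
      rcases mul_eq_zero.mp h3 with h | h
      · exact absurd h h2k
      · rcases mul_eq_zero.mp h with h' | h'
        · exact h'
        · exact absurd h' hβ0
    rw [hp2, map_zero, zero_mul, add_zero] at hp
    -- hp : ι p.1 = j * j
    have hcomm : j * ι p.1 = ι p.1 * j := by rw [hp, ← mul_assoc, mul_assoc]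
    have hfix1 : σ p.1 = p.1 := by
      by_contra hne
      have hz : ι (σ p.1 - p.1) * j = 0 := by
        rw [map_sub, sub_mul, ← hswap j hrel p.1, hcomm, sub_self]
      exact hj (hcank _ _ (sub_ne_zero.mpr hne) hz)
    obtain ⟨q, hq⟩ := hfix p.1 hfix1
    exact ⟨q, by rw [← hp, hq, AlgHom.commutes]⟩
  -- the square is nonzero, by simplicity of B
  have hq_ne : ∀ j : B, j ≠ 0 → (∀ a : k, ι a * j = j * ι (σ a)) → j * j ≠ 0 := by
    intro j hj hrel hjj
    have hbij := aux_bij hk2 hB4 ι hι β hβ0 j hj (hanti_of_rel j hrel)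
    have hmull : ∀ x y : B, (∃ a : k, ι a * j = y) → ∃ a : k, ι a * j = x * y := by
      rintro x y ⟨a, rfl⟩
      obtain ⟨p, hp⟩ := hbij.2 x
      simp only at hp
      refine ⟨p.1 * a, ?_⟩
      rw [← hp]
      calc ι (p.1 * a) * j = ι p.1 * (ι a * j) := by rw [map_mul, mul_assoc]
        _ = ι p.1 * (ι a * j) + ι p.2 * (ι (σ a) * (j * j)) := by
            rw [hjj, mul_zero, mul_zero, add_zero]
        _ = ι p.2 * j * (ι a * j) + ι p.1 * (ι a * j) := by
            rw [← mul_assoc (ι (σ a)) j j, ← hswap j hrel a, mul_assoc j (ι a) j,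
              ← mul_assoc (ι p.2) j (ι a * j), add_comm]
        _ = (ι p.1 + ι p.2 * j) * (ι a * j) := by rw [add_mul, add_comm]
    have hmulr : ∀ x y : B, (∃ a : k, ι a * j = y) → ∃ a : k, ι a * j = y * x := by
      rintro x y ⟨a, rfl⟩
      obtain ⟨p, hp⟩ := hbij.2 x
      simp only at hp
      refine ⟨a * σ p.1, ?_⟩
      rw [← hp]
      calc ι (a * σ p.1) * j = ι a * (ι (σ p.1) * j) := by rw [map_mul, mul_assoc]
        _ = ι a * (j * ι p.1) := by rw [hswap j hrel p.1]
        _ = ι a * (j * ι p.1) + ι a * (ι (σ p.2) * (j * j)) := by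
            rw [hjj, mul_zero, mul_zero, add_zero]
        _ = ι a * j * ι p.1 + ι a * j * (ι p.2 * j) := by
            rw [← mul_assoc (ι (σ p.2)) j j, ← hswap j hrel p.2, mul_assoc j (ι p.2) j,
              ← mul_assoc (ι a) j (ι p.2 * j), ← mul_assoc (ι a) j (ι p.1)]
        _ = (ι a * j) * (ι p.1 + ι p.2 * j) := by rw [mul_add]
    set S : Set B := {x : B | ∃ a : k, ι a * j = x} with hS
    set I : TwoSidedIdeal B := TwoSidedIdeal.mk' S
      ⟨0, by rw [map_zero, zero_mul]⟩
      (by rintro x y ⟨a, rfl⟩ ⟨b, rfl⟩; exact ⟨a + b, by rw [map_add, add_mul]⟩)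
      (by rintro x ⟨a, rfl⟩; exact ⟨-a, by rw [map_neg, neg_mul]⟩)
      (fun {x y} hy => hmull x y hy)
      (fun {x y} hx => hmulr y x hx) with hI
    haveI hsimp : IsSimpleOrder (TwoSidedIdeal B) := IsSimpleRing.simple
    rcases hsimp.eq_bot_or_eq_top I with hbot | htop
    · have hjI : j ∈ I := by
        rw [hI, TwoSidedIdeal.mem_mk']
        exact ⟨1, by rw [map_one, one_mul]⟩
      rw [hbot, TwoSidedIdeal.mem_bot] at hjI
      exact hj hjI
    · have h1I : (1 : B) ∈ I := by rw [htop]; exact TwoSidedIdeal.mem_top B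
      rw [hI, TwoSidedIdeal.mem_mk'] at h1I
      obtain ⟨a, ha⟩ := h1I
      have hcontra : (1 : B) = 0 := by
        calc (1 : B) = (ι a * j) * (ι a * j) := by rw [ha, one_mul]
          _ = ι a * (j * ι a) * j := by rw [mul_assoc, ← mul_assoc j, ← mul_assoc]
          _ = ι a * (ι (σ a) * j) * j := by rw [hswap j hrel a]
          _ = ι (a * σ a) * (j * j) := by rw [← mul_assoc, ← map_mul, mul_assoc]
          _ = 0 := by rw [hjj, mul_zero]
      exact one_ne_zero hcontra
  -- existence of an anticommuting unit
  obtain ⟨x₀, hx₀⟩ : ∃ x : B, ι β * x ≠ x * ι β := by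
    by_contra h
    push_neg at h
    have hcen : ι β ∈ Subalgebra.center ℚ B :=
      Subalgebra.mem_center_iff.mpr (fun b => (h b).symm)
    have hbot := Algebra.IsCentral.out (K := ℚ) (D := B) hcen
    rw [Algebra.mem_bot] at hbot
    obtain ⟨q, hq⟩ := hbot
    have hβq : β = algebraMap ℚ k q := hι (by rw [← hq, AlgHom.commutes])
    have hfixβ : σ β = β := by rw [hβq, AlgEquiv.commutes]
    rw [hσβ] at hfixβ
    apply hβ0
    have h2 : (2 : k) * β = 0 := by linear_combination -hfixβ
    rcases mul_eq_zero.mp h2 with h' | h'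
    · exact absurd h' h2k
    · exact h'
  have hj₀0 : ι β * x₀ - x₀ * ι β ≠ 0 := sub_ne_zero.mpr hx₀
  set j₀ : B := ι β * x₀ - x₀ * ι β with hj₀
  have hd : ι β * ι β = algebraMap ℚ B d := by rw [← map_mul, ← pow_two, hβ2, AlgHom.commutes]
  have hanti0 : ι β * j₀ = -(j₀ * ι β) := by
    have key : ι β * j₀ + j₀ * ι β = algebraMap ℚ B d * x₀ - x₀ * algebraMap ℚ B d := by
      rw [hj₀, ← hd]
      noncomm_ring
    rw [Algebra.commutes, sub_self] at key
    exact eq_neg_of_add_eq_zero_left key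
  have hrel0 := hrel_of_anti j₀ hanti0
  obtain ⟨q, hqq⟩ := hsq j₀ hj₀0 hrel0
  have hq0 : q ≠ 0 := by
    intro h0
    exact hq_ne j₀ hj₀0 hrel0 (by rw [hqq, h0, map_zero])
  have hsmul1 : q⁻¹ • algebraMap ℚ B q = 1 := by
    rw [Algebra.smul_def, ← map_mul, inv_mul_cancel₀ hq0, map_one]
  have hu1 : j₀ * (q⁻¹ • j₀) = 1 := by rw [mul_smul_comm, hqq, hsmul1]
  have hu2 : (q⁻¹ • j₀) * j₀ = 1 := by rw [smul_mul_assoc, hqq, hsmul1]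
  refine ⟨⟨⟨j₀, q⁻¹ • j₀, hu1, hu2⟩, hrel0⟩, ?_, ?_⟩
  · -- uniqueness up to k^×
    intro j j' hjrel hj'rel
    have hjne : (j : B) ≠ 0 := Units.ne_zero j
    have hbij := aux_bij hk2 hB4 ι hι β hβ0 (j : B) hjne (hanti_of_rel _ hjrel)
    obtain ⟨p, hp⟩ := hbij.2 (j' : B)
    simp only at hp
    have e : ι β * (ι p.1 + ι p.2 * (j : B)) = -((ι p.1 + ι p.2 * (j : B)) * ι β) := by
      rw [hp]; exact hanti_of_rel _ hj'rel
    rw [hexp _ p.1 p.2, hexp' _ hjrel p.1 p.2, neg_add, ← neg_mul, ← map_neg, ← map_neg,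
      neg_neg] at e
    have h2 := hbij.1 (a₁ := (β * p.1, β * p.2)) (a₂ := (-(p.1 * β), p.2 * β)) e
    have hcoord : β * p.1 = -(p.1 * β) := congrArg Prod.fst h2
    have hp1 : p.1 = 0 := by
      have h3 : (2 : k) * (p.1 * β) = 0 := by linear_combination hcoord
      rcases mul_eq_zero.mp h3 with h | h
      · exact absurd h h2k
      · rcases mul_eq_zero.mp h with h' | h'
        · exact h'
        · exact absurd h' hβ0
    rw [hp1, map_zero, zero_add] at hp
    have hp2 : p.2 ≠ 0 := by
      intro h0
      rw [h0, map_zero, zero_mul] at hp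
      exact Units.ne_zero j' hp.symm
    exact ⟨Units.mk0 p.2 hp2, by rw [Units.val_mk0, hp]⟩
  · -- properties of any anticommuting unit
    intro j hjrel
    have hjne : (j : B) ≠ 0 := Units.ne_zero j
    have hbij := aux_bij hk2 hB4 ι hι β hβ0 (j : B) hjne (hanti_of_rel _ hjrel)
    obtain ⟨q', hq'⟩ := hsq (j : B) hjne hjrel
    refine ⟨⟨q', ?_, by rw [pow_two, hq']⟩, hbij⟩
    intro h0
    rw [h0, map_zero] at hq'
    have : ((j * j : Bˣ) : B) = 0 := by rw [Units.val_mul, hq']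
    exact Units.ne_zero (j * j) this
end

section
/- Up to ℚ^×-scaling, λ(x,y) = Trd(δ⁻¹ x ȳ) is the unique symplectic form on B compatible with the involution †: if λ' : B × B → ℚ is any alternating ℚ-bilinear form satisfying λ'(b·x, y) = λ'(x, b†·y) for all b, x, y ∈ B, then λ' = c·λ for some c ∈ ℚ. -/
open scoped TensorProduct

/- STATEMENT 2: Up to ℚ^×-scaling, λ(x,y) = Trd(δ⁻¹ x ȳ) is the unique symplectic form
on B compatible with †: any alternating ℚ-bilinear form λ' with λ'(b·x,y) = λ'(x,b†·y)
satisfies λ' = c·λ for some c ∈ ℚ. -/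

theorem statement2
    (k : Type) [Field k] [NumberField k] (hk2 : Module.finrank ℚ k = 2)
    (D : ℤ) (hD : D < 0) (hdisc : NumberField.discr k = D)
    (B : Type) [Ring B] [Algebra ℚ B]
    (hB4 : Module.finrank ℚ B = 4)
    [Algebra.IsCentral ℚ B] [IsSimpleRing B]
    (hBindef : Nonempty ((ℝ ⊗[ℚ] B) ≃ₐ[ℝ] Matrix (Fin 2) (Fin 2) ℝ))
    (ι : k →ₐ[ℚ] B) (hι : Function.Injective ι)
    (conj : B →ₗ[ℚ] B)
    (hconj_mul : ∀ x y : B, conj (x * y) = conj y * conj x)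
    (hconj_conj : ∀ x : B, conj (conj x) = x)
    (hconj_one : conj 1 = 1)
    (σ : k ≃ₐ[ℚ] k) (hσ : σ ≠ AlgEquiv.refl)
    (hconjk : ∀ a : k, conj (ι a) = ι (σ a))
    (Trd : B → ℚ) (hTrd : ∀ x : B, x + conj x = algebraMap ℚ B (Trd x))
    (δ : k) (hδ : δ ^ 2 = algebraMap ℚ k (D : ℚ))
    (lam : B → B → ℚ)
    (hlam : ∀ x y : B, lam x y = Trd (ι δ⁻¹ * x * conj y)) :
    ∀ lam' : B → B → ℚ,
      -- λ' is ℚ-bilinear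
      (∀ x x' y : B, lam' (x + x') y = lam' x y + lam' x' y) →
      (∀ (q : ℚ) (x y : B), lam' (q • x) y = q * lam' x y) →
      (∀ x y y' : B, lam' x (y + y') = lam' x y + lam' x y') →
      (∀ (q : ℚ) (x y : B), lam' x (q • y) = q * lam' x y) →
      -- alternating
      (∀ x : B, lam' x x = 0) →
      -- compatible with the involution †
      (∀ b x y : B, lam' (b * x) y = lam' x (ι δ * conj b * ι δ⁻¹ * y)) →
      ∃ c : ℚ, ∀ x y : B, lam' x y = c * lam x y := by
  intro lam' hadd1 hsmul1 hadd2 hsmul2 halt hcompat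
  haveI hBnt : Nontrivial B := by
    by_contra h
    rw [not_nontrivial_iff_subsingleton] at h
    rw [Module.finrank_zero_of_subsingleton] at hB4
    norm_num at hB4
  have hinj : Function.Injective (algebraMap ℚ B) := (algebraMap ℚ B).injective
  have hkinj : Function.Injective (algebraMap ℚ k) := (algebraMap ℚ k).injective
  have hDQ : (D : ℚ) < 0 := by exact_mod_cast hD
  have hDQ0 : (D : ℚ) ≠ 0 := ne_of_lt hDQ
  have hδ0 : δ ≠ 0 := by
    intro h
    rw [h] at hδ
    have : (D : ℚ) = 0 := by
      apply hkinj
      rw [← hδ]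
      simp
    exact hDQ0 this
  -- δ is not rational
  have hδ_not : ∀ q : ℚ, δ ≠ algebraMap ℚ k q := by
    intro q h
    have h2 : (algebraMap ℚ k (q ^ 2)) = algebraMap ℚ k (D : ℚ) := by
      rw [map_pow, ← h, hδ]
    have hq : q ^ 2 = (D : ℚ) := hkinj h2
    nlinarith [sq_nonneg q]
  -- σ δ = -δ
  have hσδ : σ δ = -δ := by
    have hsq : σ δ * σ δ = δ * δ := by
      have h1 : (σ δ) ^ 2 = δ ^ 2 := by
        rw [← map_pow, hδ, AlgEquiv.commutes]
      rw [← sq, ← sq, h1]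
    rcases mul_self_eq_mul_self_iff.mp hsq with h | h
    · exfalso
      apply hσ
      have hli : LinearIndependent ℚ ![(1 : k), δ] := by
        rw [LinearIndependent.pair_iff]
        intro s t hst
        by_cases ht : t = 0
        · subst ht
          simp only [zero_smul, add_zero, smul_eq_zero] at hst
          refine ⟨hst.resolve_right (one_ne_zero), rfl⟩
        · exfalso
          apply hδ_not (-s / t)
          have hst' : algebraMap ℚ k s + algebraMap ℚ k t * δ = 0 := by
            rw [← Algebra.smul_def]
            simpa [Algebra.smul_def] using hst
          have htk : algebraMap ℚ k t ≠ 0 := by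
            simpa using ht
          rw [map_div₀, map_neg, eq_div_iff htk]
          linear_combination hst'
      have hcard : Fintype.card (Fin 2) = Module.finrank ℚ k := by simp [hk2]
      have hb := basisOfLinearIndependentOfCardEqFinrank hli hcard
      have hbb : ⇑(basisOfLinearIndependentOfCardEqFinrank hli hcard) = ![(1 : k), δ] :=
        coe_basisOfLinearIndependentOfCardEqFinrank hli hcard
      have hlin : σ.toLinearMap = (AlgEquiv.refl : k ≃ₐ[ℚ] k).toLinearMap := by
        apply (basisOfLinearIndependentOfCardEqFinrank hli hcard).ext
        intro i
        fin_cases i <;> simp [hbb, h]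
      ext x
      have := LinearMap.congr_fun hlin x
      simpa using this
    · exact h
  have hσδi : σ δ⁻¹ = -δ⁻¹ := by rw [map_inv₀, hσδ, inv_neg]
  set e := ι δ with he
  set e' := ι δ⁻¹ with he'
  have hee' : e * e' = 1 := by rw [he, he', ← map_mul, mul_inv_cancel₀ hδ0, map_one]
  have he'e : e' * e = 1 := by rw [he, he', ← map_mul, inv_mul_cancel₀ hδ0, map_one]
  have hce : conj e = -e := by rw [he, hconjk, hσδ, map_neg]
  have hce' : conj e' = -e' := by rw [he', hconjk, hσδi, map_neg]
  -- Trd basics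
  have hconj_eq : ∀ x : B, conj x = algebraMap ℚ B (Trd x) - x := fun x =>
    eq_sub_of_add_eq' (hTrd x)
  have hT1 : Trd 1 = 2 := by
    apply hinj
    rw [← hTrd 1, hconj_one]
    norm_num [map_ofNat]
  have hTadd : ∀ x y : B, Trd (x + y) = Trd x + Trd y := by
    intro x y
    apply hinj
    rw [map_add, ← hTrd, ← hTrd, ← hTrd, map_add]
    abel
  have hTsmul : ∀ (q : ℚ) (x : B), Trd (q • x) = q * Trd x := by
    intro q x
    apply hinj
    rw [← hTrd, map_smul, map_mul, ← Algebra.smul_def, ← hTrd, smul_add]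
  have hTneg : ∀ x : B, Trd (-x) = -Trd x := by
    intro x
    have := hTsmul (-1) x
    simpa using this
  have hTconj : ∀ x : B, Trd (conj x) = Trd x := by
    intro x
    apply hinj
    rw [← hTrd, ← hTrd, hconj_conj]
    abel
  -- cyclicity of the trace
  have hTkey : ∀ u v : B, algebraMap ℚ B (Trd (u * v)) =
      u * v + v * u - algebraMap ℚ B (Trd v) * u - algebraMap ℚ B (Trd u) * v
        + algebraMap ℚ B (Trd u) * algebraMap ℚ B (Trd v) := by
    intro u v
    rw [← hTrd (u * v), hconj_mul, hconj_eq u, hconj_eq v]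
    have h1 := Algebra.commutes (A := B) (Trd u) v
    have h2 : algebraMap ℚ B (Trd v) * algebraMap ℚ B (Trd u)
        = algebraMap ℚ B (Trd u) * algebraMap ℚ B (Trd v) := by
      rw [← map_mul, ← map_mul, mul_comm]
    rw [sub_mul, mul_sub, mul_sub, h2]
    rw [← h1]
    abel
  have hTcomm : ∀ u v : B, Trd (u * v) = Trd (v * u) := by
    intro u v
    apply hinj
    rw [hTkey u v, hTkey v u]
    have h2 : algebraMap ℚ B (Trd v) * algebraMap ℚ B (Trd u)
        = algebraMap ℚ B (Trd u) * algebraMap ℚ B (Trd v) := by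
      rw [← map_mul, ← map_mul, mul_comm]
    rw [h2]
    abel
  -- the involution dagger
  set dg : B → B := fun z => e * conj z * e' with hdgdef
  have hdgz : ∀ z : B, dg z = e * conj z * e' := fun z => rfl
  have hdg1 : dg 1 = 1 := by rw [hdgz, hconj_one, mul_one, hee']
  have hdg_add : ∀ z w : B, dg (z + w) = dg z + dg w := by
    intro z w
    rw [hdgz, hdgz, hdgz, map_add, mul_add, add_mul]
  have hdg_sub : ∀ z w : B, dg (z - w) = dg z - dg w := by
    intro z w
    rw [hdgz, hdgz, hdgz, map_sub, mul_sub, sub_mul]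
  have hcdg : ∀ z : B, conj (dg z) = e' * z * e := by
    intro z
    rw [hdgz, hconj_mul, hconj_mul, hconj_conj, hce, hce']
    simp only [neg_mul, mul_neg, neg_neg, mul_assoc]
  have hdgdg : ∀ z : B, dg (dg z) = z := by
    intro z
    rw [hdgz (dg z), hcdg]
    simp only [mul_assoc, hee', mul_one]
    rw [← mul_assoc, hee', one_mul]
  -- skew elements are multiples of e
  have hskew : ∀ w : B, dg w = -w → w = (Trd (e' * w) / 2) • e := by
    intro w hw
    have h2 : conj w * e' = -(e' * w) := by
      have h := congrArg (fun t => e' * t) hw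
      simp only [hdgz] at h
      calc conj w * e' = (e' * e) * (conj w * e') := by rw [he'e, one_mul]
        _ = e' * (e * conj w * e') := by simp only [mul_assoc]
        _ = e' * (-w) := h
        _ = -(e' * w) := by rw [mul_neg]
    have h1 : conj (e' * w) = e' * w := by
      rw [hconj_mul, hce', mul_neg, h2, neg_neg]
    have h3 : e' * w = (Trd (e' * w) / 2) • (1 : B) := by
      have h4 : (2 : ℚ) • (e' * w) = algebraMap ℚ B (Trd (e' * w)) := by
        rw [two_smul]
        nth_rewrite 2 [← h1]
        exact hTrd (e' * w)
      calc e' * w = ((2 : ℚ)⁻¹ * 2) • (e' * w) := by norm_num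
        _ = (2 : ℚ)⁻¹ • ((2 : ℚ) • (e' * w)) := by rw [mul_smul]
        _ = (2 : ℚ)⁻¹ • algebraMap ℚ B (Trd (e' * w)) := by rw [h4]
        _ = (Trd (e' * w) / 2) • (1 : B) := by
            rw [Algebra.algebraMap_eq_smul_one, smul_smul, div_eq_inv_mul]
    calc w = e * (e' * w) := by rw [← mul_assoc, hee', one_mul]
      _ = e * ((Trd (e' * w) / 2) • (1 : B)) := by rw [← h3]
      _ = (Trd (e' * w) / 2) • e := by rw [mul_smul_comm, mul_one]
  -- the key uniqueness computation, for any compatible alternating form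
  have key : ∀ L : B → B → ℚ,
      (∀ x y y' : B, L x (y + y') = L x y + L x y') →
      (∀ (q : ℚ) (x y : B), L x (q • y) = q * L x y) →
      (∀ x : B, L x x = 0) →
      (∀ x y : B, L x y = L 1 (dg x * y)) →
      ∀ x y : B, L x y = Trd (e' * (dg x * y - dg (dg x * y))) / 2 * L 1 e / 2 := by
    intro L hLa hLs hL0 hLc x y
    have hLsub : ∀ z w : B, L 1 (z - w) = L 1 z - L 1 w := by
      intro z w
      have h := hLa 1 z ((-1 : ℚ) • w)
      rw [hLs] at h
      simpa [sub_eq_add_neg] using h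
    have h0 : ∀ w : B, L 1 (dg w * w) = 0 := by
      intro w
      rw [← hLc]
      exact hL0 w
    have hz1 : L 1 1 = 0 := by
      have := h0 1
      rwa [hdg1, one_mul] at this
    have hνdg : ∀ z : B, L 1 (dg z) = -L 1 z := by
      intro z
      have h1 := h0 (1 + z)
      have hexp : dg (1 + z) * (1 + z) = 1 + (z + (dg z + dg z * z)) := by
        rw [hdg_add, hdg1]
        noncomm_ring
      rw [hexp, hLa, hLa, hLa, hz1, h0 z] at h1
      linarith
    set w := dg x * y with hw
    have hskw : dg (w - dg w) = -(w - dg w) := by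
      rw [hdg_sub, hdgdg, neg_sub]
    have hrep := hskew _ hskw
    have hsub2 : L 1 (w - dg w) = 2 * L 1 w := by
      rw [hLsub, hνdg]
      ring
    have hval : L 1 (w - dg w) = Trd (e' * (w - dg w)) / 2 * L 1 e := by
      nth_rewrite 1 [hrep]
      rw [hLs]
    rw [hLc x y, ← hw]
    rw [hval] at hsub2
    linarith
  -- lam' satisfies the hypotheses of key
  have hLc' : ∀ x y : B, lam' x y = lam' 1 (dg x * y) := by
    intro x y
    have := hcompat x 1 y
    rw [mul_one] at this
    rw [this, hdgz]
  have H1 := key lam' hadd2 hsmul2 halt hLc'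
  -- lam satisfies the hypotheses of key
  have hadd2l : ∀ x y y' : B, lam x (y + y') = lam x y + lam x y' := by
    intro x y y'
    rw [hlam, hlam, hlam, map_add, mul_add, hTadd]
  have hsmul2l : ∀ (q : ℚ) (x y : B), lam x (q • y) = q * lam x y := by
    intro q x y
    rw [hlam, hlam, map_smul, mul_smul_comm, hTsmul]
  have haltl : ∀ x : B, lam x x = 0 := by
    intro x
    rw [hlam]
    have h1 : Trd (e' * x * conj x) = Trd (conj (e' * x * conj x)) := (hTconj _).symm
    have h2 : conj (e' * x * conj x) = -(x * (conj x * e')) := by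
      rw [hconj_mul, hconj_mul, hconj_conj, hce']
      simp only [mul_neg, neg_mul, mul_assoc]
    rw [h2, hTneg] at h1
    have h3 : Trd (x * (conj x * e')) = Trd (e' * x * conj x) := by
      rw [hTcomm, mul_assoc, hTcomm]
    rw [h3] at h1
    linarith
  have hLcl : ∀ x y : B, lam x y = lam 1 (dg x * y) := by
    intro x y
    rw [hlam, hlam]
    have h1 : e' * 1 * conj (dg x * y) = e' * (conj y * (e' * x)) * e := by
      rw [mul_one, hconj_mul, hcdg]
      simp only [mul_assoc]
    rw [h1, hTcomm (e' * (conj y * (e' * x))) e]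
    have h2 : e * (e' * (conj y * (e' * x))) = conj y * (e' * x) := by
      rw [← mul_assoc, hee', one_mul]
    rw [h2]
    exact hTcomm (e' * x) (conj y)
  have H2 := key lam hadd2l hsmul2l haltl hLcl
  -- value of lam at (1, e)
  have hμ0e : lam 1 e = -2 := by
    rw [hlam, mul_one, hce, mul_neg, hTneg, he'e, hT1]
  refine ⟨-(lam' 1 e) / 2, ?_⟩
  intro x y
  rw [H1 x y, H2 x y, hμ0e]
  ring
end

section
/- Let k be an imaginary quadratic field and 𝔞 a nonzero fractional ideal of k. Then the ideal class [𝔞] is a square in the class group CL(k) if and only if the ideal norm Nm(𝔞) is the norm of an element of k^×, i.e., Nm(𝔞) ∈ Nm_{k/ℚ}(k^×). -/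
open NumberField
open scoped nonZeroDivisors ComplexConjugate

set_option synthInstance.maxHeartbeats 400000
set_option maxHeartbeats 1000000

/- STATEMENT 9: For an imaginary quadratic field k and a nonzero fractional ideal 𝔞 of
k, the class [𝔞] is a square in CL(k) if and only if the ideal norm Nm(𝔞) lies in
Nm_{k/ℚ}(k^×). -/

section Aux

variable {k : Type} [Field k] [NumberField k]

theorem aux_norm_pos (hk2 : Module.finrank ℚ k = 2) (him : NumberField.discr k < 0)
    {x : k} (hx : x ≠ 0) : 0 < Algebra.norm ℚ x := by
  classical
  have hcard : Fintype.card (k →ₐ[ℚ] ℂ) = 2 := by rw [AlgHom.card]; exact hk2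
  by_cases hall : ∀ σ : k →ₐ[ℚ] ℂ, ∀ z : k, conj (σ z) = σ z
  · -- then the discriminant is a square of a real number, contradiction
    exfalso
    have hbcard : Fintype.card (Module.Free.ChooseBasisIndex ℤ (𝓞 k))
        = Fintype.card (k →ₐ[ℚ] ℂ) := by
      rw [hcard, ← Module.finrank_eq_card_basis (integralBasis k), hk2]
    let e : Module.Free.ChooseBasisIndex ℤ (𝓞 k) ≃ (k →ₐ[ℚ] ℂ) := Fintype.equivOfCardEq hbcard
    have hdisc := Algebra.discr_eq_det_embeddingsMatrixReindex_pow_two ℚ ℂ (integralBasis k) e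
    set M := Algebra.embeddingsMatrixReindex ℚ ℂ (integralBasis k) e with hM
    have hdet : conj M.det = M.det := by
      rw [RingHom.map_det]
      congr 1
      ext i j
      exact hall (e j) (integralBasis k i)
    have him' : (M.det).im = 0 := Complex.conj_eq_iff_im.mp hdet
    have hre : ((NumberField.discr k : ℚ) : ℂ) = (M.det) ^ 2 := by
      have h0 : (algebraMap ℚ ℂ) ((NumberField.discr k : ℚ)) = M.det ^ 2 := by
        rw [NumberField.coe_discr]; exact hdisc
      rw [← h0, eq_ratCast (algebraMap ℚ ℂ)]
    have hnn : (0 : ℝ) ≤ ((NumberField.discr k : ℚ) : ℝ) := by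
      have h1 : ((NumberField.discr k : ℚ) : ℂ).re = M.det.re ^ 2 - M.det.im ^ 2 := by
        rw [hre]; simp [pow_two, Complex.mul_re]
      have h2 : ((NumberField.discr k : ℚ) : ℂ).re = ((NumberField.discr k : ℚ) : ℝ) := by
        simp [Complex.ofReal_ratCast]
      rw [← h2, h1, him']
      simpa using sq_nonneg M.det.re
    have h3 : (0:ℚ) ≤ (NumberField.discr k : ℚ) := by exact_mod_cast hnn
    have h4 : (0:ℤ) ≤ NumberField.discr k := by exact_mod_cast h3
    omega
  · push_neg at hall
    obtain ⟨σ, z₀, hz₀⟩ := hall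
    let conjA : ℂ →ₐ[ℚ] ℂ := (Complex.conjAe.toAlgHom.restrictScalars ℚ)
    let σ' : k →ₐ[ℚ] ℂ := conjA.comp σ
    have hσ'app : ∀ z, σ' z = conj (σ z) := fun z => rfl
    have hσσ' : σ' ≠ σ := by
      intro h
      exact hz₀ (by rw [← hσ'app z₀, h])
    have huniv : (Finset.univ : Finset (k →ₐ[ℚ] ℂ)) = {σ', σ} := by
      symm
      apply Finset.eq_of_subset_of_card_le (Finset.subset_univ _)
      rw [Finset.card_insert_of_notMem (by simpa using hσσ'), Finset.card_singleton,
        Finset.card_univ, hcard]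
    have hnorm : ((Algebra.norm ℚ x : ℚ) : ℂ) = σ' x * σ x := by
      have h5 := Algebra.norm_eq_prod_embeddings (K := ℚ) (E := ℂ) (L := k) x
      rw [huniv, Finset.prod_pair hσσ'] at h5
      rw [← h5, eq_ratCast (algebraMap ℚ ℂ)]
    have hnormsq : ((Algebra.norm ℚ x : ℚ) : ℂ) = (Complex.normSq (σ x) : ℝ) := by
      rw [hnorm, hσ'app, mul_comm, Complex.mul_conj]
    have hpos : (0:ℝ) < Complex.normSq (σ x) := by
      rw [Complex.normSq_pos]
      simpa using (map_ne_zero σ).mpr hx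
    have hR : ((Algebra.norm ℚ x : ℚ) : ℝ) = Complex.normSq (σ x) := by
      rw [show ((Algebra.norm ℚ x : ℚ) : ℂ) = (((Algebra.norm ℚ x : ℚ) : ℝ) : ℂ) by
        simp [Complex.ofReal_ratCast]] at hnormsq
      exact_mod_cast hnormsq
    have : (0:ℝ) < ((Algebra.norm ℚ x : ℚ) : ℝ) := by rw [hR]; exact hpos
    exact_mod_cast this

theorem aux_absNorm_span_natCast (hk2 : Module.finrank ℚ k = 2) (p : ℕ) :
    Ideal.absNorm (Ideal.span {(p : 𝓞 k)}) = p ^ 2 := by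
  have h : ((p : ℤ) : 𝓞 k) = (p : 𝓞 k) := by push_cast; ring
  have hcard : Fintype.card (Module.Free.ChooseBasisIndex ℤ (𝓞 k)) = 2 := by
    rw [← Module.finrank_eq_card_basis (RingOfIntegers.basis k),
      NumberField.RingOfIntegers.rank, hk2]
  rw [Ideal.absNorm_span_singleton, ← h, ← map_intCast (algebraMap ℤ (𝓞 k)),
    Algebra.norm_algebraMap_of_basis (RingOfIntegers.basis k), hcard]
  simp [Int.natAbs_pow]

theorem aux_absNorm_span_eq_norm (b : 𝓞 k) :
    (Ideal.absNorm (Ideal.span {b}) : ℚ) = |Algebra.norm ℚ (b : k)| := by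
  have h1 := FractionalIdeal.coeIdeal_absNorm (R := 𝓞 k) (K := k) (Ideal.span {b})
  rw [FractionalIdeal.coeIdeal_span_singleton, FractionalIdeal.absNorm_span_singleton] at h1
  exact h1.symm

set_option synthInstance.maxHeartbeats 1000000 in
set_option maxHeartbeats 1000000 in

set_option synthInstance.maxHeartbeats 1000000 in
set_option maxHeartbeats 1000000 in
theorem aux_mem_of_dvd_absNorm {P : Ideal (𝓞 k)} (hP : P.IsPrime) (hP0 : P ≠ ⊥)
    {p : ℕ} (hp : p.Prime) (hdvd : p ∣ Ideal.absNorm P) : (p : 𝓞 k) ∈ P := by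
  have hfin : Finite (𝓞 k ⧸ P) := by
    rw [← Ideal.absNorm_ne_zero_iff]
    simpa [Ideal.absNorm_eq_zero_iff] using hP0
  haveI := hP.isMaximal hP0
  letI : Field (𝓞 k ⧸ P) := Ideal.Quotient.field P
  letI : Fintype (𝓞 k ⧸ P) := Fintype.ofFinite _
  set q := ringChar (𝓞 k ⧸ P) with hq
  obtain ⟨n, hqp, hcard⟩ := FiniteField.card (𝓞 k ⧸ P) q
  have habs : Ideal.absNorm P = Fintype.card (𝓞 k ⧸ P) := by
    rw [Ideal.absNorm_apply, Submodule.cardQuot_apply, Nat.card_eq_fintype_card]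
  rw [habs, hcard] at hdvd
  have hpq : p = q := (Nat.prime_dvd_prime_iff_eq hp hqp).mp (hp.dvd_of_dvd_pow hdvd)
  have hzero : ((p : ℕ) : 𝓞 k ⧸ P) = 0 := by
    rw [hpq]; exact CharP.cast_eq_zero _ q
  rwa [← map_natCast (Ideal.Quotient.mk P), Ideal.Quotient.eq_zero_iff_mem] at hzero

theorem aux_eq_span_of_absNorm_sq (hk2 : Module.finrank ℚ k = 2) {P : Ideal (𝓞 k)}
    {p : ℕ} (hp : p.Prime) (hne : P ≠ ⊤) (hmem : (p : 𝓞 k) ∈ P)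
    (hn : Ideal.absNorm P = p ^ 2) :
    P = Ideal.span {(p : 𝓞 k)} := by
  have hle : Ideal.span {(p : 𝓞 k)} ≤ P := by
    rw [Ideal.span_le, Set.singleton_subset_iff]; exact hmem
  obtain ⟨C, hC⟩ := (Ideal.dvd_iff_le).mpr hle
  have habs := congrArg Ideal.absNorm hC
  rw [_root_.map_mul, aux_absNorm_span_natCast hk2, hn] at habs
  have hC1 : Ideal.absNorm C = 1 := by
    have h2 := hp.two_le
    nlinarith [habs]
  rw [hC, Ideal.absNorm_eq_one_iff.mp hC1, Ideal.mul_top]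

theorem aux_exists_prime {I : Ideal (𝓞 k)} (hI : I ≠ ⊥) {p : ℕ} (hp : p.Prime)
    (h : p ∣ Ideal.absNorm I) :
    ∃ P : Ideal (𝓞 k), P.IsPrime ∧ P ≠ ⊥ ∧ P ∣ I ∧ (p : 𝓞 k) ∈ P := by
  classical
  have hprod : (UniqueFactorizationMonoid.normalizedFactors I).prod = I :=
    prod_normalizedFactors_eq_self hI
  have habs : Ideal.absNorm I =
      ((UniqueFactorizationMonoid.normalizedFactors I).map Ideal.absNorm).prod := by
    rw [← map_multiset_prod, hprod]
  rw [habs] at h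
  obtain ⟨b, hbmem, hbdvd⟩ := hp.prime.exists_mem_multiset_dvd h
  obtain ⟨P, hPmem, rfl⟩ := Multiset.mem_map.mp hbmem
  have hPprime : Prime P := UniqueFactorizationMonoid.prime_of_normalized_factor P hPmem
  have hPisPrime : P.IsPrime := Ideal.isPrime_of_prime hPprime
  exact ⟨P, hPisPrime, hPprime.ne_zero,
    UniqueFactorizationMonoid.dvd_of_mem_normalizedFactors hPmem,
    aux_mem_of_dvd_absNorm hPisPrime hPprime.ne_zero hp hbdvd⟩

theorem aux_core (hk2 : Module.finrank ℚ k = 2) :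
    ∀ n : ℕ, ∀ I J : (Ideal (𝓞 k))⁰, Ideal.absNorm (I : Ideal (𝓞 k)) = n →
      Ideal.absNorm (J : Ideal (𝓞 k)) = n →
      ∃ c : ClassGroup (𝓞 k), c ^ 2 = ClassGroup.mk0 I * (ClassGroup.mk0 J)⁻¹ := by
  intro n
  induction n using Nat.strong_induction_on with
  | _ n ih =>
  intro I J hIn hJn
  have hI0 : (I : Ideal (𝓞 k)) ≠ ⊥ := by
    have := I.2; rwa [mem_nonZeroDivisors_iff_ne_zero, ne_eq, Submodule.zero_eq_bot] at this
  have hJ0 : (J : Ideal (𝓞 k)) ≠ ⊥ := by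
    have := J.2; rwa [mem_nonZeroDivisors_iff_ne_zero, ne_eq, Submodule.zero_eq_bot] at this
  have hn0 : n ≠ 0 := by
    rw [← hIn]; simpa [Ideal.absNorm_eq_zero_iff] using hI0
  by_cases hn1 : n = 1
  · subst hn1
    have hI : (I : Ideal (𝓞 k)) = ⊤ := Ideal.absNorm_eq_one_iff.mp hIn
    have hJ : (J : Ideal (𝓞 k)) = ⊤ := Ideal.absNorm_eq_one_iff.mp hJn
    have hIJ : I = J := Subtype.ext (hI.trans hJ.symm)
    exact ⟨1, by simp [hIJ]⟩
  -- now n ≥ 2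
  set p := n.minFac with hpdef
  have hp : p.Prime := Nat.minFac_prime hn1
  have hpd : p ∣ n := Nat.minFac_dvd n
  obtain ⟨P, hPpr, hP0, hPdvd, hPmem⟩ := aux_exists_prime hI0 hp (hIn ▸ hpd)
  obtain ⟨Q, hQpr, hQ0, hQdvd, hQmem⟩ := aux_exists_prime hJ0 hp (hJn ▸ hpd)
  obtain ⟨I₁, hI₁⟩ := hPdvd
  obtain ⟨J₁, hJ₁⟩ := hQdvd
  have hI₁0 : I₁ ≠ ⊥ := by rintro rfl; simp at hI₁; exact hI0 hI₁
  have hJ₁0 : J₁ ≠ ⊥ := by rintro rfl; simp at hJ₁; exact hJ0 hJ₁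
  have hspanle : ∀ {R : Ideal (𝓞 k)}, (p : 𝓞 k) ∈ R → Ideal.span {(p : 𝓞 k)} ≤ R := by
    intro R hR; rwa [Ideal.span_le, Set.singleton_subset_iff]
  have hNormPQ : ∀ {R : Ideal (𝓞 k)}, R.IsPrime → R ≠ ⊥ → (p : 𝓞 k) ∈ R →
      Ideal.absNorm R = p ∨ Ideal.absNorm R = p ^ 2 := by
    intro R hRpr hR0 hRmem
    have hdvd : Ideal.absNorm R ∣ p ^ 2 := by
      rw [← aux_absNorm_span_natCast hk2 p]
      exact Ideal.absNorm_dvd_absNorm_of_le (hspanle hRmem)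
    obtain ⟨i, hi2, hRn⟩ := (Nat.dvd_prime_pow hp).mp hdvd
    interval_cases i
    · exact absurd (Ideal.absNorm_eq_one_iff.mp (by simpa using hRn)) hRpr.ne_top
    · exact Or.inl (by simpa using hRn)
    · exact Or.inr hRn
  have hmixed : ∀ {R S : Ideal (𝓞 k)}, R.IsPrime → R ≠ ⊥ → (p : 𝓞 k) ∈ R →
      S.IsPrime → S ≠ ⊥ → (p : 𝓞 k) ∈ S →
      Ideal.absNorm R = p → Ideal.absNorm S = p ^ 2 → False := by
    intro R S hRpr hR0 hRmem hSpr hS0 hSmem hRn hSn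
    have hSspan : S = Ideal.span {(p : 𝓞 k)} :=
      aux_eq_span_of_absNorm_sq hk2 hp hSpr.ne_top hSmem hSn
    have hSmax : S.IsMaximal := hSpr.isMaximal hS0
    have hRS : S = R := hSmax.eq_of_le hRpr.ne_top (hSspan ▸ hspanle hRmem)
    rw [hRS, hRn] at hSn
    have := hp.two_le
    nlinarith [hSn]
  set P' : (Ideal (𝓞 k))⁰ := ⟨P, mem_nonZeroDivisors_iff_ne_zero.mpr (by
    rwa [ne_eq, Submodule.zero_eq_bot])⟩ with hP'def
  set Q' : (Ideal (𝓞 k))⁰ := ⟨Q, mem_nonZeroDivisors_iff_ne_zero.mpr (by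
    rwa [ne_eq, Submodule.zero_eq_bot])⟩ with hQ'def
  have main : Ideal.absNorm P = Ideal.absNorm Q ∧
      ∃ d : ClassGroup (𝓞 k),
        d ^ 2 = ClassGroup.mk0 P' * (ClassGroup.mk0 Q')⁻¹ := by
    rcases hNormPQ hPpr hP0 hPmem with hPn | hPn <;>
      rcases hNormPQ hQpr hQ0 hQmem with hQn | hQn
    · refine ⟨hPn.trans hQn.symm, ?_⟩
      by_cases hPQ : P = Q
      · exact ⟨1, by rw [show P' = Q' from Subtype.ext hPQ]; simp⟩
      · -- split case : P * Q = (p)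
        have hPmax : P.IsMaximal := hPpr.isMaximal hP0
        have hQmax : Q.IsMaximal := hQpr.isMaximal hQ0
        have hcop : IsCoprime P Q :=
          Ideal.isCoprime_iff_sup_eq.mpr (Ideal.IsMaximal.coprime_of_ne hPmax hQmax hPQ)
        obtain ⟨C, hC⟩ := hcop.mul_dvd (Ideal.dvd_iff_le.mpr (hspanle hPmem))
          (Ideal.dvd_iff_le.mpr (hspanle hQmem))
        have habs := congrArg Ideal.absNorm hC
        rw [aux_absNorm_span_natCast hk2 p, _root_.map_mul, _root_.map_mul, hPn, hQn] at habs
        have hC1 : Ideal.absNorm C = 1 := by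
          have h2 := hp.two_le
          nlinarith [habs]
        rw [Ideal.absNorm_eq_one_iff.mp hC1, Ideal.mul_top] at hC
        have hspan0 : Ideal.span {(p : 𝓞 k)} ≠ (⊥ : Ideal (𝓞 k)) := by
          rw [ne_eq, Ideal.span_singleton_eq_bot]
          exact_mod_cast hp.ne_zero ∘ fun h => by exact_mod_cast h
        have hPQ' : P' * Q' = ⟨Ideal.span {(p : 𝓞 k)},
            mem_nonZeroDivisors_iff_ne_zero.mpr (by rwa [ne_eq, Submodule.zero_eq_bot])⟩ :=
          Subtype.ext hC.symm
        have hone : ClassGroup.mk0 P' * ClassGroup.mk0 Q' = 1 := by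
          rw [← _root_.map_mul, hPQ']
          exact (ClassGroup.mk0_eq_one_iff _).mpr ⟨⟨(p : 𝓞 k), rfl⟩⟩
        refine ⟨ClassGroup.mk0 P', ?_⟩
        rw [sq, inv_eq_of_mul_eq_one_left hone]
    · exact (hmixed hPpr hP0 hPmem hQpr hQ0 hQmem hPn hQn).elim
    · exact (hmixed hQpr hQ0 hQmem hPpr hP0 hPmem hQn hPn).elim
    · have h1 : P = Ideal.span {(p : 𝓞 k)} :=
        aux_eq_span_of_absNorm_sq hk2 hp hPpr.ne_top hPmem hPn
      have h2 : Q = Ideal.span {(p : 𝓞 k)} :=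
        aux_eq_span_of_absNorm_sq hk2 hp hQpr.ne_top hQmem hQn
      exact ⟨hPn.trans hQn.symm, 1, by
        rw [show P' = Q' from Subtype.ext (h1.trans h2.symm)]; simp⟩
  obtain ⟨hNeq, d, hd⟩ := main
  -- reduce to smaller norm
  set I₁' : (Ideal (𝓞 k))⁰ := ⟨I₁, mem_nonZeroDivisors_iff_ne_zero.mpr (by
    rwa [ne_eq, Submodule.zero_eq_bot])⟩ with hI₁'def
  set J₁' : (Ideal (𝓞 k))⁰ := ⟨J₁, mem_nonZeroDivisors_iff_ne_zero.mpr (by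
    rwa [ne_eq, Submodule.zero_eq_bot])⟩ with hJ₁'def
  have hImul : I = P' * I₁' := Subtype.ext hI₁
  have hJmul : J = Q' * J₁' := Subtype.ext hJ₁
  have hNP0 : Ideal.absNorm P ≠ 0 := by simpa [Ideal.absNorm_eq_zero_iff] using hP0
  have hNP1 : 1 < Ideal.absNorm P := by
    have hne1 : Ideal.absNorm P ≠ 1 := fun h => hPpr.ne_top (Ideal.absNorm_eq_one_iff.mp h)
    omega
  have hnI : n = Ideal.absNorm P * Ideal.absNorm I₁ := by
    rw [← hIn, hI₁, _root_.map_mul]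
  have hnJ : n = Ideal.absNorm Q * Ideal.absNorm J₁ := by
    rw [← hJn, hJ₁, _root_.map_mul]
  have hNI₁0 : Ideal.absNorm I₁ ≠ 0 := by simpa [Ideal.absNorm_eq_zero_iff] using hI₁0
  have heq : Ideal.absNorm J₁ = Ideal.absNorm I₁ := by
    rw [← hNeq] at hnJ
    exact Nat.eq_of_mul_eq_mul_left (Nat.pos_of_ne_zero hNP0) (hnJ.symm.trans hnI)
  have hlt : Ideal.absNorm I₁ < n := by
    rw [hnI]
    exact lt_mul_of_one_lt_left (Nat.pos_of_ne_zero hNI₁0) hNP1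
  obtain ⟨c, hc⟩ := ih (Ideal.absNorm I₁) hlt I₁' J₁' rfl heq
  refine ⟨d * c, ?_⟩
  rw [hImul, hJmul, _root_.map_mul, _root_.map_mul, mul_pow, hc, hd, mul_inv]
  exact mul_mul_mul_comm _ _ _ _

theorem aux_norm_inv (y : k) (hy : y ≠ 0) :
    Algebra.norm ℚ y⁻¹ = (Algebra.norm ℚ y)⁻¹ := by
  have h : Algebra.norm ℚ y * Algebra.norm ℚ y⁻¹ = 1 := by
    rw [← _root_.map_mul, mul_inv_cancel₀ hy, _root_.map_one]
  exact eq_inv_of_mul_eq_one_left (by rw [mul_comm] at h; exact h)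



end Aux

theorem statement9
    (k : Type) [Field k] [NumberField k]
    (hk2 : Module.finrank ℚ k = 2) (him : NumberField.discr k < 0)
    (𝔞 : (FractionalIdeal (𝓞 k)⁰ k)ˣ) :
    (∃ c : ClassGroup (𝓞 k), c ^ 2 = ClassGroup.mk k 𝔞) ↔
      ∃ x : k, x ≠ 0 ∧
        Algebra.norm ℚ x = FractionalIdeal.absNorm (𝔞 : FractionalIdeal (𝓞 k)⁰ k) := by
  have h𝔞0 : (𝔞 : FractionalIdeal (𝓞 k)⁰ k) ≠ 0 := Units.ne_zero 𝔞
  have habs𝔞0 : FractionalIdeal.absNorm (𝔞 : FractionalIdeal (𝓞 k)⁰ k) ≠ 0 := by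
    rw [ne_eq, FractionalIdeal.absNorm_eq_zero_iff]; exact h𝔞0
  constructor
  · rintro ⟨c, hc⟩
    obtain ⟨B, rfl⟩ := ClassGroup.mk0_surjective c
    set u : (FractionalIdeal (𝓞 k)⁰ k)ˣ := FractionalIdeal.mk0 k (B ^ 2) * 𝔞⁻¹ with hu
    have hmku : ClassGroup.mk k u = 1 := by
      rw [hu, _root_.map_mul, _root_.map_inv, ClassGroup.mk_mk0, _root_.map_pow, hc,
        mul_inv_cancel]
    obtain ⟨y, hy⟩ := (ClassGroup.mk_eq_one_iff.mp hmku).principal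
    have huval : (u : FractionalIdeal (𝓞 k)⁰ k) = FractionalIdeal.spanSingleton (𝓞 k)⁰ y := by
      rw [← FractionalIdeal.coe_spanSingleton (𝓞 k)⁰ y] at hy
      exact FractionalIdeal.coeToSubmodule_injective hy
    have hy0 : y ≠ 0 := by
      intro h
      apply Units.ne_zero u
      rw [huval, h, FractionalIdeal.spanSingleton_zero]
    have hval : FractionalIdeal.spanSingleton (𝓞 k)⁰ y * (𝔞 : FractionalIdeal (𝓞 k)⁰ k)
        = ((B : Ideal (𝓞 k)) ^ 2 : Ideal (𝓞 k)) := by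
      have : u * 𝔞 = FractionalIdeal.mk0 k (B ^ 2) := by
        rw [hu, mul_assoc, inv_mul_cancel, mul_one]
      have h2 := congrArg (fun w : (FractionalIdeal (𝓞 k)⁰ k)ˣ => (w : FractionalIdeal (𝓞 k)⁰ k)) this
      simp only [Units.val_mul] at h2
      rw [huval] at h2
      rw [h2, FractionalIdeal.coe_mk0]
      norm_cast
    have habs := congrArg FractionalIdeal.absNorm hval
    rw [_root_.map_mul, FractionalIdeal.absNorm_span_singleton,
      FractionalIdeal.coeIdeal_absNorm, _root_.map_pow, Nat.cast_pow] at habs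
    have hnormy : 0 < Algebra.norm ℚ y := aux_norm_pos hk2 him hy0
    rw [abs_of_pos hnormy] at habs
    set q : ℚ := (Ideal.absNorm (B : Ideal (𝓞 k)) : ℚ) with hq
    have hq0 : q ≠ 0 := by
      rw [hq, ne_eq, Nat.cast_eq_zero, Ideal.absNorm_eq_zero_iff]
      have := B.2
      rwa [mem_nonZeroDivisors_iff_ne_zero, ne_eq, Submodule.zero_eq_bot] at this
    refine ⟨algebraMap ℚ k q * y⁻¹, ?_, ?_⟩
    · apply mul_ne_zero
      · simpa using hq0
      · simpa using hy0
    · rw [_root_.map_mul, Algebra.norm_algebraMap, hk2, aux_norm_inv y hy0]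
      rw [← habs]
      field_simp
  · rintro ⟨x, hx0, hx⟩
    obtain ⟨a, I₀, ha0, h𝔞⟩ :=
      FractionalIdeal.exists_eq_spanSingleton_mul (𝔞 : FractionalIdeal (𝓞 k)⁰ k)
    have haK : algebraMap (𝓞 k) k a ≠ 0 := by
      rw [ne_eq, IsFractionRing.to_map_eq_zero_iff]; exact ha0
    have hval : (I₀ : FractionalIdeal (𝓞 k)⁰ k)
        = FractionalIdeal.spanSingleton (𝓞 k)⁰ (algebraMap (𝓞 k) k a)
          * (𝔞 : FractionalIdeal (𝓞 k)⁰ k) := by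
      rw [h𝔞, ← mul_assoc, FractionalIdeal.spanSingleton_mul_spanSingleton,
        mul_inv_cancel₀ haK, FractionalIdeal.spanSingleton_one, one_mul]
    have habsI₀ := congrArg FractionalIdeal.absNorm hval
    rw [_root_.map_mul, FractionalIdeal.absNorm_span_singleton,
      FractionalIdeal.coeIdeal_absNorm] at habsI₀
    have hI₀0 : I₀ ≠ ⊥ := by
      intro h
      rw [h] at habsI₀
      simp only [Ideal.absNorm_bot, Nat.cast_zero] at habsI₀
      exact habs𝔞0 (by
        rcases mul_eq_zero.mp habsI₀.symm with h' | h'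
        · exact absurd h' (by simpa using haK)
        · exact h')
    -- the class of 𝔞 equals the class of I₀
    have hclass : ClassGroup.mk0 ⟨I₀, mem_nonZeroDivisors_iff_ne_zero.mpr (by
        rwa [ne_eq, Submodule.zero_eq_bot])⟩ = ClassGroup.mk k 𝔞 := by
      set s : (FractionalIdeal (𝓞 k)⁰ k)ˣ :=
        Units.mk0 (FractionalIdeal.spanSingleton (𝓞 k)⁰ (algebraMap (𝓞 k) k a))
          (FractionalIdeal.spanSingleton_ne_zero_iff.mpr haK) with hs
      have hU : FractionalIdeal.mk0 k ⟨I₀, mem_nonZeroDivisors_iff_ne_zero.mpr (by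
          rwa [ne_eq, Submodule.zero_eq_bot])⟩ = s * 𝔞 := by
        apply Units.ext
        rw [Units.val_mul, FractionalIdeal.coe_mk0]
        exact hval
      rw [← ClassGroup.mk_mk0 (K := k), hU, _root_.map_mul]
      have hms : ClassGroup.mk k s = 1 := by
        apply ClassGroup.mk_eq_one_iff.mpr
        exact ⟨⟨algebraMap (𝓞 k) k a, by
          rw [hs, Units.val_mk0, FractionalIdeal.coe_spanSingleton]⟩⟩
      rw [hms, one_mul]
    -- write x * a as a quotient of integers
    obtain ⟨b, c, hcmem, hbc⟩ := IsFractionRing.div_surjective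
      (A := 𝓞 k) (x * algebraMap (𝓞 k) k a)
    have hc0 : c ≠ 0 := nonZeroDivisors.ne_zero hcmem
    have hcK : algebraMap (𝓞 k) k c ≠ 0 := by
      rw [ne_eq, IsFractionRing.to_map_eq_zero_iff]; exact hc0
    have hE : x * algebraMap (𝓞 k) k a * algebraMap (𝓞 k) k c = algebraMap (𝓞 k) k b := by
      field_simp at hbc
      linear_combination -hbc
    have hbK : algebraMap (𝓞 k) k b ≠ 0 := by
      rw [← hE]
      exact mul_ne_zero (mul_ne_zero hx0 haK) hcK
    have hb0 : b ≠ 0 := by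
      intro h; rw [h, _root_.map_zero] at hbK; exact hbK rfl
    -- positivity facts
    have hpa : 0 < Algebra.norm ℚ (algebraMap (𝓞 k) k a) := aux_norm_pos hk2 him haK
    have hpc : 0 < Algebra.norm ℚ (algebraMap (𝓞 k) k c) := aux_norm_pos hk2 him hcK
    have hpb : 0 < Algebra.norm ℚ (algebraMap (𝓞 k) k b) := aux_norm_pos hk2 him hbK
    have hpx : 0 < Algebra.norm ℚ x := aux_norm_pos hk2 him hx0
    -- norm identity
    have hnormE : Algebra.norm ℚ x * Algebra.norm ℚ (algebraMap (𝓞 k) k a)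
        * Algebra.norm ℚ (algebraMap (𝓞 k) k c)
        = Algebra.norm ℚ (algebraMap (𝓞 k) k b) := by
      rw [← _root_.map_mul, ← _root_.map_mul, hE]
    -- the two integral ideals have the same norm
    have hNat : Ideal.absNorm (I₀ * Ideal.span {c}) = Ideal.absNorm (Ideal.span {b}) := by
      have hQ : (Ideal.absNorm (I₀ * Ideal.span {c}) : ℚ)
          = (Ideal.absNorm (Ideal.span {b}) : ℚ) := by
        rw [_root_.map_mul, Nat.cast_mul, aux_absNorm_span_eq_norm, aux_absNorm_span_eq_norm,
          habsI₀, abs_of_pos hpa, abs_of_pos hpc, abs_of_pos hpb, ← hnormE, ← hx]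
        ring
      exact_mod_cast hQ
    -- apply the core lemma
    set I' : (Ideal (𝓞 k))⁰ := ⟨I₀, mem_nonZeroDivisors_iff_ne_zero.mpr (by
      rwa [ne_eq, Submodule.zero_eq_bot])⟩ with hI'
    set C' : (Ideal (𝓞 k))⁰ := ⟨Ideal.span {c}, mem_nonZeroDivisors_iff_ne_zero.mpr (by
      rw [ne_eq, Submodule.zero_eq_bot, Ideal.span_singleton_eq_bot]; exact hc0)⟩ with hC'
    set J' : (Ideal (𝓞 k))⁰ := ⟨Ideal.span {b}, mem_nonZeroDivisors_iff_ne_zero.mpr (by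
      rw [ne_eq, Submodule.zero_eq_bot, Ideal.span_singleton_eq_bot]; exact hb0)⟩ with hJ'
    obtain ⟨c₀, hc₀⟩ := aux_core hk2 (Ideal.absNorm ((I' * C' : (Ideal (𝓞 k))⁰) : Ideal (𝓞 k)))
      (I' * C') J' rfl (by
        rw [hJ']
        rw [show ((I' * C' : (Ideal (𝓞 k))⁰) : Ideal (𝓞 k)) = I₀ * Ideal.span {c} from rfl]
        exact hNat.symm)
    refine ⟨c₀, ?_⟩
    rw [hc₀, _root_.map_mul]
    have h1 : ClassGroup.mk0 C' = 1 := (ClassGroup.mk0_eq_one_iff _).mpr ⟨⟨c, rfl⟩⟩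
    have h2 : ClassGroup.mk0 J' = 1 := (ClassGroup.mk0_eq_one_iff _).mpr ⟨⟨b, rfl⟩⟩
    rw [h1, h2, mul_one, inv_one, mul_one, hclass]
end

section
/- Let k be an imaginary quadratic field of odd discriminant and let 𝔞, 𝔟 be nonzero fractional ideals of k. Then the self-dual hermitian O_k-modules L_𝔞 = O_k ⊕ 𝔞 and L_𝔟 = O_k ⊕ 𝔟 (with forms ⟨(x₁,x₂),(y₁,y₂)⟩ = x₁ȳ₁ − x₂ȳ₂/Nm(𝔞), resp. the analogous form for 𝔟) are isometric if and only if [𝔞] = [𝔟] in the ideal class group CL(k). -/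
open NumberField
open scoped nonZeroDivisors
open FractionalIdeal

lemma aux_linmap {k : Type} [Field k] [NumberField k]
    (I : FractionalIdeal (𝓞 k)⁰ k) (f : ((I : Submodule (𝓞 k) k)) →ₗ[𝓞 k] k)
    {a₀ : k} (ha₀ : a₀ ∈ (I : Submodule (𝓞 k) k)) (h0 : a₀ ≠ 0) :
    ∃ r : k, ∀ x (hx : x ∈ (I : Submodule (𝓞 k) k)), f ⟨x, hx⟩ = r * x := by
  obtain ⟨d, hd, hden⟩ := I.prop
  refine ⟨f ⟨a₀, ha₀⟩ / a₀, fun x hx => ?_⟩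
  obtain ⟨u, hu⟩ := hden x hx
  obtain ⟨v, hv⟩ := hden a₀ ha₀
  have hdk : algebraMap (𝓞 k) k d ≠ 0 := by
    simpa using (IsFractionRing.injective (𝓞 k) k).ne_iff.mpr (nonZeroDivisors.ne_zero hd)
  have key : v • (⟨x, hx⟩ : (I : Submodule (𝓞 k) k)) = u • ⟨a₀, ha₀⟩ := by
    apply Subtype.ext
    push_cast [Submodule.coe_smul]
    rw [Algebra.smul_def, Algebra.smul_def, hu, hv,
      Algebra.smul_def, Algebra.smul_def]
    ring
  have h1 := congrArg f key
  rw [map_smul, map_smul] at h1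
  have h2 : algebraMap (𝓞 k) k v * f ⟨x, hx⟩ = algebraMap (𝓞 k) k u * f ⟨a₀, ha₀⟩ := by
    simpa [Algebra.smul_def] using h1
  rw [hu, hv, Algebra.smul_def, Algebra.smul_def] at h2
  have h3 : a₀ * f ⟨x, hx⟩ = x * f ⟨a₀, ha₀⟩ :=
    mul_left_cancel₀ hdk (by linear_combination h2)
  field_simp
  linear_combination h3


lemma cg_of_span {k : Type} [Field k] [NumberField k]
    (𝔞 𝔟 : (FractionalIdeal (𝓞 k)⁰ k)ˣ) (c : k) (hc : c ≠ 0)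
    (h : spanSingleton (𝓞 k)⁰ c * (𝔞 : FractionalIdeal (𝓞 k)⁰ k) = 𝔟) :
    ClassGroup.mk k 𝔞 = ClassGroup.mk k 𝔟 := by
  have hu : (toPrincipalIdeal (𝓞 k) k (Units.mk0 c hc)) * 𝔞 = 𝔟 := by
    apply Units.ext
    rw [Units.val_mul, coe_toPrincipalIdeal]
    exact h
  rw [← hu, _root_.map_mul]
  have h1 : ClassGroup.mk k (toPrincipalIdeal (𝓞 k) k (Units.mk0 c hc)) = 1 :=
    ClassGroup.mk_eq_one_iff.mpr ⟨⟨c, by rw [coe_toPrincipalIdeal, coe_spanSingleton]; rfl⟩⟩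
  rw [h1, one_mul]

lemma span_of_cg {k : Type} [Field k] [NumberField k]
    (𝔞 𝔟 : (FractionalIdeal (𝓞 k)⁰ k)ˣ) (h : ClassGroup.mk k 𝔞 = ClassGroup.mk k 𝔟) :
    ∃ c : k, c ≠ 0 ∧ spanSingleton (𝓞 k)⁰ c * (𝔞 : FractionalIdeal (𝓞 k)⁰ k) = 𝔟 := by
  have h1 : ClassGroup.mk k (𝔟 * 𝔞⁻¹) = 1 := by
    rw [_root_.map_mul, ← h, _root_.map_inv, mul_inv_cancel]
  obtain ⟨x, hx⟩ := (ClassGroup.mk_eq_one_iff.mp h1).principal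
  have hxspan : spanSingleton (𝓞 k)⁰ x = ((𝔟 * 𝔞⁻¹ : (FractionalIdeal (𝓞 k)⁰ k)ˣ) :
      FractionalIdeal (𝓞 k)⁰ k) := by
    apply coeToSubmodule_injective
    show (spanSingleton (𝓞 k)⁰ x : Submodule (𝓞 k) k) = _
    rw [coe_spanSingleton, ← hx]
  have hx0 : x ≠ 0 := by
    intro h0
    subst h0
    rw [spanSingleton_eq_zero_iff.mpr rfl] at hxspan
    exact (Units.ne_zero (𝔟 * 𝔞⁻¹)) hxspan.symm
  refine ⟨x, hx0, ?_⟩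
  rw [hxspan]
  have : ((𝔟 * 𝔞⁻¹ : (FractionalIdeal (𝓞 k)⁰ k)ˣ) : FractionalIdeal (𝓞 k)⁰ k) *
      ((𝔞 : FractionalIdeal (𝓞 k)⁰ k)) = ((𝔟 * 𝔞⁻¹ * 𝔞 : (FractionalIdeal (𝓞 k)⁰ k)ˣ) :
        FractionalIdeal (𝓞 k)⁰ k) := by
    rw [Units.val_mul, Units.val_mul]
    rfl
  rw [this, inv_mul_cancel_right]


lemma quad_main (k : Type) [Field k] [NumberField k]
    (hk2 : Module.finrank ℚ k = 2)
    (σ : k ≃ₐ[ℚ] k) (hσ : σ ≠ AlgEquiv.refl) :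
    (∀ c : k, algebraMap ℚ k (Algebra.norm ℚ c) = c * σ c) ∧
      (NumberField.discr k < 0 → ∀ c : k, c ≠ 0 → 0 < Algebra.norm ℚ c) := by
  obtain ⟨v, hv⟩ : ∃ v : k, σ v ≠ v := by
    by_contra h
    push_neg at h
    exact hσ (AlgEquiv.ext fun x => h x)
  have hrat : ∀ q : ℚ, σ (algebraMap ℚ k q) = algebraMap ℚ k q := fun q => σ.commutes q
  -- basis {1, v}
  have liv : LinearIndependent ℚ ![(1 : k), v] := by
    rw [LinearIndependent.pair_iff]
    intro s t hst
    rcases eq_or_ne t 0 with h | h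
    · subst h
      refine ⟨?_, rfl⟩
      have : s • (1:k) = 0 := by simpa using hst
      simpa using this
    · exfalso
      apply hv
      have hveq : v = algebraMap ℚ k (-s/t) := by
        have h1 : algebraMap ℚ k s + algebraMap ℚ k t * v = 0 := by
          simpa [Algebra.smul_def] using hst
        have ht : algebraMap ℚ k t ≠ 0 := by
          simpa using h
        rw [map_div₀, map_neg, eq_div_iff ht]
        linear_combination h1
      rw [hveq]; exact hrat _
  have cardeq : Fintype.card (Fin 2) = Module.finrank ℚ k := by simp [hk2]
  set bv : Module.Basis (Fin 2) ℚ k := basisOfLinearIndependentOfCardEqFinrank liv cardeq with hbvdef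
  have hbv : ⇑bv = ![(1:k), v] := coe_basisOfLinearIndependentOfCardEqFinrank liv cardeq
  -- v ^2 = a + b v
  set a : ℚ := bv.repr (v*v) 0
  set b : ℚ := bv.repr (v*v) 1
  have hquad : v * v = algebraMap ℚ k a + algebraMap ℚ k b * v := by
    conv_lhs => rw [← bv.sum_repr (v*v)]
    rw [Fin.sum_univ_two, hbv]
    simp [Algebra.smul_def]
    rfl
  -- σ (σ v) = v
  have hfactor : ∀ x y : k, x * x = algebraMap ℚ k a + algebraMap ℚ k b * x →
      y * y = algebraMap ℚ k a + algebraMap ℚ k b * y → x ≠ y → x + y = algebraMap ℚ k b := by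
    intro x y hx hy hxy
    have h0 : (x - y) * (x + y - algebraMap ℚ k b) = 0 := by linear_combination hx - hy
    rcases mul_eq_zero.mp h0 with h | h
    · exact absurd (sub_eq_zero.mp h) hxy
    · linear_combination h
  have hquadσ : σ v * σ v = algebraMap ℚ k a + algebraMap ℚ k b * σ v := by
    have := congrArg σ hquad
    simpa [_root_.map_mul, _root_.map_add, hrat] using this
  have hquadσ2 : σ (σ v) * σ (σ v) = algebraMap ℚ k a + algebraMap ℚ k b * σ (σ v) := by
    have := congrArg σ hquadσ
    simpa [_root_.map_mul, _root_.map_add, hrat] using this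
  have hσ2v : σ (σ v) = v := by
    have h1 : v + σ v = algebraMap ℚ k b := hfactor v (σ v) hquad hquadσ (Ne.symm hv)
    have h2 : σ v + σ (σ v) = algebraMap ℚ k b := by
      refine hfactor (σ v) (σ (σ v)) hquadσ hquadσ2 ?_
      intro h
      exact hv (σ.injective h.symm)
    linear_combination h2 - h1
  -- the element w with σ w = -w
  set w : k := v - σ v with hwdef
  have hw0 : w ≠ 0 := sub_ne_zero.mpr (Ne.symm hv)
  have hσw : σ w = -w := by
    rw [hwdef, map_sub, hσ2v]; ring
  -- basis {1, w}
  have liw : LinearIndependent ℚ ![(1 : k), w] := by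
    rw [LinearIndependent.pair_iff]
    intro s t hst
    rcases eq_or_ne t 0 with h | h
    · subst h
      refine ⟨?_, rfl⟩
      have : s • (1:k) = 0 := by simpa using hst
      simpa using this
    · exfalso
      have ht : algebraMap ℚ k t ≠ 0 := by simpa using h
      have h1 : algebraMap ℚ k s + algebraMap ℚ k t * w = 0 := by
        simpa [Algebra.smul_def] using hst
      have hweq : w = algebraMap ℚ k (-s/t) := by
        rw [map_div₀, map_neg, eq_div_iff ht]
        linear_combination h1
      have : σ w = w := by rw [hweq]; exact hrat _
      rw [hσw] at this
      apply hw0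
      have h2 : (2 : k) * w = 0 := by linear_combination -this
      have h20 : (2 : k) ≠ 0 := two_ne_zero
      exact (mul_eq_zero.mp h2).resolve_left h20
  set bw : Module.Basis (Fin 2) ℚ k := basisOfLinearIndependentOfCardEqFinrank liw cardeq with hbwdef
  have hbw : ⇑bw = ![(1:k), w] := coe_basisOfLinearIndependentOfCardEqFinrank liw cardeq
  -- coordinates
  have hcoord : ∀ z : k, z = algebraMap ℚ k (bw.repr z 0) + algebraMap ℚ k (bw.repr z 1) * w := by
    intro z
    conv_lhs => rw [← bw.sum_repr z]
    rw [Fin.sum_univ_two, hbw]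
    simp [Algebra.smul_def]
  have hrepr : ∀ p q : ℚ, bw.repr (algebraMap ℚ k p + algebraMap ℚ k q * w) 0 = p ∧
      bw.repr (algebraMap ℚ k p + algebraMap ℚ k q * w) 1 = q := by
    intro p q
    have : algebraMap ℚ k p + algebraMap ℚ k q * w = p • bw 0 + q • bw 1 := by
      rw [hbw]
      simp [Algebra.smul_def]
    rw [this]
    simp [Finsupp.single_apply]
  -- σ in coordinates
  have hσcoord : ∀ z : k, σ z = algebraMap ℚ k (bw.repr z 0) - algebraMap ℚ k (bw.repr z 1) * w := by
    intro z
    have h2 := congrArg σ (hcoord z)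
    rw [_root_.map_add, _root_.map_mul, hrat, hrat, hσw] at h2
    rw [h2]; ring
  -- w * w is rational
  obtain ⟨d, hd⟩ : ∃ d : ℚ, algebraMap ℚ k d = w * w := by
    have hfixed : σ (w * w) = w * w := by rw [_root_.map_mul, hσw]; ring
    refine ⟨bw.repr (w*w) 0, ?_⟩
    have h1 := hcoord (w*w)
    have h2 := hσcoord (w*w)
    rw [hfixed] at h2
    have h3 : (2:k) * (algebraMap ℚ k (bw.repr (w*w) 1) * w) = 0 := by linear_combination h2 - h1
    have h4 : algebraMap ℚ k (bw.repr (w*w) 1) * w = 0 :=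
      (mul_eq_zero.mp h3).resolve_left two_ne_zero
    rcases mul_eq_zero.mp h4 with h | h
    · linear_combination -h1 - w * h
    · exact absurd h hw0
  -- norm formula
  have hnorm : ∀ c : k, Algebra.norm ℚ c =
      bw.repr c 0 * bw.repr c 0 - bw.repr c 1 * bw.repr c 1 * d := by
    intro c
    rw [Algebra.norm_eq_matrix_det bw, Matrix.det_fin_two]
    have e00 : Algebra.leftMulMatrix bw c 0 0 = bw.repr c 0 := by
      rw [Algebra.leftMulMatrix_eq_repr_mul, hbw]
      simp
    have e10 : Algebra.leftMulMatrix bw c 1 0 = bw.repr c 1 := by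
      rw [Algebra.leftMulMatrix_eq_repr_mul, hbw]
      simp
    have hcw : c * w = algebraMap ℚ k (bw.repr c 1 * d) +
        algebraMap ℚ k (bw.repr c 0) * w := by
      conv_lhs => rw [hcoord c]
      rw [_root_.map_mul]
      linear_combination (-(algebraMap ℚ k (bw.repr c 1))) * hd
    have e01 : Algebra.leftMulMatrix bw c 0 1 = bw.repr c 1 * d := by
      rw [Algebra.leftMulMatrix_eq_repr_mul, hbw]
      simp only [Matrix.cons_val_one, Matrix.head_cons, Matrix.cons_val_zero]
      rw [hcw]
      exact (hrepr _ _).1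
    have e11 : Algebra.leftMulMatrix bw c 1 1 = bw.repr c 0 := by
      rw [Algebra.leftMulMatrix_eq_repr_mul, hbw]
      simp only [Matrix.cons_val_one, Matrix.head_cons, Matrix.cons_val_zero]
      rw [hcw]
      exact (hrepr _ _).2
    rw [e00, e01, e10, e11]
    ring
  constructor
  · -- norm = c * σ c
    intro c
    have hc1 := hcoord c
    have hc2 := hσcoord c
    rw [hnorm c, map_sub, _root_.map_mul, _root_.map_mul, _root_.map_mul]
    linear_combination (-(σ c)) * hc1 +
      (-(algebraMap ℚ k (bw.repr c 0) + algebraMap ℚ k (bw.repr c 1) * w)) * hc2 +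
      (-(algebraMap ℚ k (bw.repr c 1) * algebraMap ℚ k (bw.repr c 1))) * hd
  · -- positivity
    intro him c hc
    have htrace : ∀ c : k, Algebra.trace ℚ k c = bw.repr c 0 + bw.repr c 0 := by
      intro c
      rw [Algebra.trace_eq_matrix_trace bw, Matrix.trace_fin_two]
      have e00 : Algebra.leftMulMatrix bw c 0 0 = bw.repr c 0 := by
        rw [Algebra.leftMulMatrix_eq_repr_mul, hbw]
        simp
      have hcw : c * w = algebraMap ℚ k (bw.repr c 1 * d) +
          algebraMap ℚ k (bw.repr c 0) * w := by
        conv_lhs => rw [hcoord c]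
        rw [_root_.map_mul]
        linear_combination (-(algebraMap ℚ k (bw.repr c 1))) * hd
      have e11 : Algebra.leftMulMatrix bw c 1 1 = bw.repr c 0 := by
        rw [Algebra.leftMulMatrix_eq_repr_mul, hbw]
        simp only [Matrix.cons_val_one, Matrix.head_cons, Matrix.cons_val_zero]
        rw [hcw]
        exact (hrepr _ _).2
      rw [e00, e11]
    have hrepr1 : bw.repr (1:k) 0 = 1 ∧ bw.repr (1:k) 1 = 0 := by
      have h1 : (1:k) = algebraMap ℚ k 1 + algebraMap ℚ k 0 * w := by simp
      rw [h1]; exact hrepr 1 0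
    have hreprw : bw.repr w 0 = 0 ∧ bw.repr w 1 = 1 := by
      have h1 : w = algebraMap ℚ k 0 + algebraMap ℚ k 1 * w := by simp
      conv_lhs => rw [h1]
      conv_rhs => rw [h1]
      exact hrepr 0 1
    have hreprww : bw.repr (w*w) 0 = d ∧ bw.repr (w*w) 1 = 0 := by
      have h1 : w * w = algebraMap ℚ k d + algebraMap ℚ k 0 * w := by
        rw [hd]; simp
      rw [h1]; exact hrepr d 0
    have hdneg : d < 0 := by
      have hdisc : ((NumberField.discr k : ℚ)) < 0 := by exact_mod_cast him
      rw [NumberField.coe_discr] at hdisc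
      have hcard : Fintype.card (Module.Free.ChooseBasisIndex ℤ (𝓞 k)) = 2 := by
        rw [← hk2]
        exact (Module.finrank_eq_card_basis (integralBasis k)).symm
      let e : Module.Free.ChooseBasisIndex ℤ (𝓞 k) ≃ Fin 2 :=
        Fintype.equivFinOfCardEq hcard
      let ib2 : Module.Basis (Fin 2) ℚ k := (integralBasis k).reindex e
      have hib2 : Algebra.discr ℚ ⇑ib2 = Algebra.discr ℚ ⇑(integralBasis k) := by
        rw [Module.Basis.coe_reindex]
        exact Algebra.discr_reindex ℚ (integralBasis k) e
      let P : Matrix (Fin 2) (Fin 2) ℚ := ib2.toMatrix ⇑bw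
      have hP : ⇑bw = Matrix.vecMul ⇑ib2 (P.map (algebraMap ℚ k)) := by
        funext j
        rw [show (Matrix.vecMul ⇑ib2 (P.map (algebraMap ℚ k))) j
            = ∑ i, ib2 i * algebraMap ℚ k (P i j) by
          simp [Matrix.vecMul, dotProduct, Matrix.map_apply]]
        rw [← ib2.sum_repr (bw j)]
        refine Finset.sum_congr rfl fun i _ => ?_
        show (ib2.repr (bw j)) i • ib2 i = ib2 i * algebraMap ℚ k (ib2.toMatrix ⇑bw i j)
        rw [Module.Basis.toMatrix_apply, Algebra.smul_def]
        ring
      have hPdet : P.det ≠ 0 := by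
        letI := ib2.invertibleToMatrix bw
        exact (Matrix.isUnit_det_of_invertible P).ne_zero
      have hdiscbw : Algebra.discr ℚ ⇑bw = P.det ^ 2 * Algebra.discr ℚ ⇑(integralBasis k) := by
        rw [hP, Algebra.discr_of_matrix_vecMul, hib2]
      have hdisc4 : Algebra.discr ℚ ⇑bw = 4 * d := by
        rw [Algebra.discr_def, Matrix.det_fin_two]
        have t00 : Algebra.traceMatrix ℚ ⇑bw 0 0 = 2 := by
          rw [Algebra.traceMatrix_apply, Algebra.traceForm_apply, hbw]
          simp only [Matrix.cons_val_zero, one_mul]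
          rw [htrace 1, hrepr1.1]; norm_num
        have t01 : Algebra.traceMatrix ℚ ⇑bw 0 1 = 0 := by
          rw [Algebra.traceMatrix_apply, Algebra.traceForm_apply, hbw]
          simp only [Matrix.cons_val_zero, Matrix.cons_val_one, Matrix.head_cons, one_mul]
          rw [htrace w, hreprw.1]; norm_num
        have t10 : Algebra.traceMatrix ℚ ⇑bw 1 0 = 0 := by
          rw [Algebra.traceMatrix_apply, Algebra.traceForm_apply, hbw]
          simp only [Matrix.cons_val_zero, Matrix.cons_val_one, Matrix.head_cons, mul_one]
          rw [htrace w, hreprw.1]; norm_num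
        have t11 : Algebra.traceMatrix ℚ ⇑bw 1 1 = 2 * d := by
          rw [Algebra.traceMatrix_apply, Algebra.traceForm_apply, hbw]
          simp only [Matrix.cons_val_one, Matrix.head_cons, Matrix.cons_val_zero]
          rw [htrace (w*w), hreprww.1]; ring
        rw [t00, t01, t10, t11]; ring
      have hp2 : 0 < P.det ^ 2 := lt_of_le_of_ne (sq_nonneg _) (Ne.symm (pow_ne_zero 2 hPdet))
      nlinarith [hdisc4, hdiscbw, hdisc, hp2]
    rw [hnorm c]
    have hne : ¬ (bw.repr c 0 = 0 ∧ bw.repr c 1 = 0) := by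
      rintro ⟨h0, h1⟩
      apply hc
      rw [hcoord c, h0, h1]
      simp
    rcases eq_or_ne (bw.repr c 1) 0 with h | h
    · have h0 : bw.repr c 0 ≠ 0 := fun hh => hne ⟨hh, h⟩
      rw [h]
      nlinarith [sq_nonneg (bw.repr c 0), mul_self_pos.mpr h0]
    · nlinarith [sq_nonneg (bw.repr c 0), mul_self_pos.mpr h, hdneg]

/-- The underlying `O_k`-module of the hermitian module `L_𝔞 = O_k ⊕ 𝔞`. -/
abbrev LatA (k : Type) [Field k] [NumberField k]
    (𝔞 : (FractionalIdeal (𝓞 k)⁰ k)ˣ) : Type :=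
  𝓞 k × ((𝔞 : FractionalIdeal (𝓞 k)⁰ k) : Submodule (𝓞 k) k)

/-- The hermitian form `⟨(x₁,x₂),(y₁,y₂)⟩ = x₁ȳ₁ − x₂ȳ₂/Nm(𝔞)` on `L_𝔞 = O_k ⊕ 𝔞`,
written with values in `k` (on `L_𝔞` it takes values in `O_k`). -/
noncomputable def formA {k : Type} [Field k] [NumberField k] (σ : k ≃ₐ[ℚ] k)
    (𝔞 : (FractionalIdeal (𝓞 k)⁰ k)ˣ) (x y : LatA k 𝔞) : k :=
  algebraMap (𝓞 k) k x.1 * σ (algebraMap (𝓞 k) k y.1) -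
    (x.2 : k) * σ (y.2 : k) /
      algebraMap ℚ k (FractionalIdeal.absNorm (𝔞 : FractionalIdeal (𝓞 k)⁰ k))

/- STATEMENT 11: For an imaginary quadratic field k of odd discriminant and nonzero
fractional ideals 𝔞, 𝔟, the self-dual hermitian O_k-modules L_𝔞 and L_𝔟 are isometric
if and only if [𝔞] = [𝔟] in the ideal class group CL(k). -/

theorem statement11
    (k : Type) [Field k] [NumberField k]
    (hk2 : Module.finrank ℚ k = 2) (him : NumberField.discr k < 0)
    (hodd : Odd (NumberField.discr k))
    -- complex conjugation, i.e. the nontrivial automorphism of k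
    (σ : k ≃ₐ[ℚ] k) (hσ : σ ≠ AlgEquiv.refl)
    (𝔞 𝔟 : (FractionalIdeal (𝓞 k)⁰ k)ˣ) :
    (∃ φ : LatA k 𝔞 ≃ₗ[𝓞 k] LatA k 𝔟,
        ∀ x y : LatA k 𝔞, formA σ 𝔟 (φ x) (φ y) = formA σ 𝔞 x y) ↔
      ClassGroup.mk k 𝔞 = ClassGroup.mk k 𝔟 := by
  constructor
  · rintro ⟨φ, -⟩
    -- module isomorphism implies equal Steinitz classes
    set A : Submodule (𝓞 k) k := ((𝔞 : FractionalIdeal (𝓞 k)⁰ k) : Submodule (𝓞 k) k) with hA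
    set B : Submodule (𝓞 k) k := ((𝔟 : FractionalIdeal (𝓞 k)⁰ k) : Submodule (𝓞 k) k) with hB
    obtain ⟨a₀, ha₀, ha₀0⟩ : ∃ a₀ : k, a₀ ∈ A ∧ a₀ ≠ 0 := by
      have : A ≠ ⊥ := by
        intro hbot
        apply Units.ne_zero 𝔞
        apply coeToSubmodule_injective
        show ((𝔞 : FractionalIdeal (𝓞 k)⁰ k) : Submodule (𝓞 k) k)
            = ((0 : FractionalIdeal (𝓞 k)⁰ k) : Submodule (𝓞 k) k)
        rw [coe_zero, ← hA, hbot]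
      exact Submodule.exists_mem_ne_zero_of_ne_bot this
    obtain ⟨b₀, hb₀, hb₀0⟩ : ∃ b₀ : k, b₀ ∈ B ∧ b₀ ≠ 0 := by
      have : B ≠ ⊥ := by
        intro hbot
        apply Units.ne_zero 𝔟
        apply coeToSubmodule_injective
        show ((𝔟 : FractionalIdeal (𝓞 k)⁰ k) : Submodule (𝓞 k) k)
            = ((0 : FractionalIdeal (𝓞 k)⁰ k) : Submodule (𝓞 k) k)
        rw [coe_zero, ← hB, hbot]
      exact Submodule.exists_mem_ne_zero_of_ne_bot this
    set ψ : LatA k 𝔟 ≃ₗ[𝓞 k] LatA k 𝔞 := φ.symm with hψ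
    -- linear functionals
    let f1 : A →ₗ[𝓞 k] k := (Algebra.linearMap (𝓞 k) k).comp
      ((LinearMap.fst (𝓞 k) (𝓞 k) B).comp (φ.toLinearMap.comp (LinearMap.inr (𝓞 k) (𝓞 k) A)))
    let f2 : A →ₗ[𝓞 k] k := B.subtype.comp
      ((LinearMap.snd (𝓞 k) (𝓞 k) B).comp (φ.toLinearMap.comp (LinearMap.inr (𝓞 k) (𝓞 k) A)))
    let g1 : B →ₗ[𝓞 k] k := (Algebra.linearMap (𝓞 k) k).comp
      ((LinearMap.fst (𝓞 k) (𝓞 k) A).comp (ψ.toLinearMap.comp (LinearMap.inr (𝓞 k) (𝓞 k) B)))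
    let g2 : B →ₗ[𝓞 k] k := A.subtype.comp
      ((LinearMap.snd (𝓞 k) (𝓞 k) A).comp (ψ.toLinearMap.comp (LinearMap.inr (𝓞 k) (𝓞 k) B)))
    obtain ⟨r, hr⟩ := aux_linmap (𝔞 : FractionalIdeal (𝓞 k)⁰ k) f1 ha₀ ha₀0
    obtain ⟨s, hs⟩ := aux_linmap (𝔞 : FractionalIdeal (𝓞 k)⁰ k) f2 ha₀ ha₀0
    obtain ⟨r', hr'⟩ := aux_linmap (𝔟 : FractionalIdeal (𝓞 k)⁰ k) g1 hb₀ hb₀0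
    obtain ⟨s', hs'⟩ := aux_linmap (𝔟 : FractionalIdeal (𝓞 k)⁰ k) g2 hb₀ hb₀0
    have hrx : ∀ xx : A, algebraMap (𝓞 k) k ((φ ((0 : 𝓞 k), xx)).1) = r * ↑xx :=
      fun xx => hr ↑xx xx.2
    have hsx : ∀ xx : A, (((φ ((0 : 𝓞 k), xx)).2 : k)) = s * ↑xx :=
      fun xx => hs ↑xx xx.2
    have hrx' : ∀ yy : B, algebraMap (𝓞 k) k ((ψ ((0 : 𝓞 k), yy)).1) = r' * ↑yy :=
      fun yy => hr' ↑yy yy.2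
    have hsx' : ∀ yy : B, (((ψ ((0 : 𝓞 k), yy)).2 : k)) = s' * ↑yy :=
      fun yy => hs' ↑yy yy.2
    -- decomposition of a general element
    have hgen : ∀ (χ : LatA k 𝔞 ≃ₗ[𝓞 k] LatA k 𝔟) (u : 𝓞 k) (xx : A),
        χ (u, xx) = u • χ (1, 0) + χ (0, xx) := by
      intro χ u xx
      rw [← _root_.map_smul, ← _root_.map_add]
      congr 1
      ext
      · simp
      · simp
    have hgen' : ∀ (χ : LatA k 𝔟 ≃ₗ[𝓞 k] LatA k 𝔞) (u : 𝓞 k) (yy : B),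
        χ (u, yy) = u • χ (1, 0) + χ (0, yy) := by
      intro χ u yy
      rw [← _root_.map_smul, ← _root_.map_add]
      congr 1
      ext
      · simp
      · simp
    set p : k := algebraMap (𝓞 k) k ((φ ((1 : 𝓞 k), (0 : A))).1) with hp
    set q : k := (((φ ((1 : 𝓞 k), (0 : A))).2 : k)) with hq
    set p' : k := algebraMap (𝓞 k) k ((ψ ((1 : 𝓞 k), (0 : B))).1) with hp'
    set q' : k := (((ψ ((1 : 𝓞 k), (0 : B))).2 : k)) with hq'
    -- component formulas
    have comp1 : ∀ (u : 𝓞 k) (xx : A),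
        algebraMap (𝓞 k) k ((φ (u, xx)).1) = algebraMap (𝓞 k) k u * p + r * ↑xx := by
      intro u xx
      rw [hgen φ u xx]
      have : (u • φ (1, 0) + φ (0, xx)).1 = u * (φ (1, 0)).1 + (φ (0, xx)).1 := rfl
      rw [this, _root_.map_add, _root_.map_mul, hrx]
    have comp2 : ∀ (u : 𝓞 k) (xx : A),
        (((φ (u, xx)).2 : k)) = algebraMap (𝓞 k) k u * q + s * ↑xx := by
      intro u xx
      rw [hgen φ u xx]
      have h0 : (u • φ (1, 0) + φ (0, xx)).2 = u • (φ (1, 0)).2 + (φ (0, xx)).2 := rfl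
      rw [h0, Submodule.coe_add, Submodule.coe_smul, Algebra.smul_def, hsx]
    have comp1' : ∀ (u : 𝓞 k) (yy : B),
        algebraMap (𝓞 k) k ((ψ (u, yy)).1) = algebraMap (𝓞 k) k u * p' + r' * ↑yy := by
      intro u yy
      rw [hgen' ψ u yy]
      have : (u • ψ (1, 0) + ψ (0, yy)).1 = u * (ψ (1, 0)).1 + (ψ (0, yy)).1 := rfl
      rw [this, _root_.map_add, _root_.map_mul, hrx']
    have comp2' : ∀ (u : 𝓞 k) (yy : B),
        (((ψ (u, yy)).2 : k)) = algebraMap (𝓞 k) k u * q' + s' * ↑yy := by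
      intro u yy
      rw [hgen' ψ u yy]
      have h0 : (u • ψ (1, 0) + ψ (0, yy)).2 = u • (ψ (1, 0)).2 + (ψ (0, yy)).2 := rfl
      rw [h0, Submodule.coe_add, Submodule.coe_smul, Algebra.smul_def, hsx']
    -- identities from ψ ∘ φ = id
    have heta : ∀ z : LatA k 𝔟, ((z.1, z.2) : LatA k 𝔟) = z := fun z => rfl
    have hid1 : ψ (φ ((1 : 𝓞 k), (0 : A))) = ((1 : 𝓞 k), (0 : A)) := φ.symm_apply_apply _
    have hid2 : ψ (φ ((0 : 𝓞 k), ⟨a₀, ha₀⟩)) = ((0 : 𝓞 k), ⟨a₀, ha₀⟩) := φ.symm_apply_apply _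
    have h1 : p * p' + r' * q = 1 := by
      have e1 := comp1' ((φ ((1 : 𝓞 k), (0 : A))).1) ((φ ((1 : 𝓞 k), (0 : A))).2)
      rw [heta, hid1, ← hp, ← hq] at e1
      simpa using e1.symm
    have h2 : p * q' + s' * q = 0 := by
      have e1 := comp2' ((φ ((1 : 𝓞 k), (0 : A))).1) ((φ ((1 : 𝓞 k), (0 : A))).2)
      rw [heta, hid1, ← hp, ← hq] at e1
      simpa using e1.symm
    have h3 : r * a₀ * p' + r' * (s * a₀) = 0 := by
      have e1 := comp1' ((φ ((0 : 𝓞 k), ⟨a₀, ha₀⟩)).1) ((φ ((0 : 𝓞 k), ⟨a₀, ha₀⟩)).2)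
      rw [heta, hid2, hrx ⟨a₀, ha₀⟩, hsx ⟨a₀, ha₀⟩] at e1
      simpa using e1.symm
    have h4 : r * a₀ * q' + s' * (s * a₀) = a₀ := by
      have e1 := comp2' ((φ ((0 : 𝓞 k), ⟨a₀, ha₀⟩)).1) ((φ ((0 : 𝓞 k), ⟨a₀, ha₀⟩)).2)
      rw [heta, hid2, hrx ⟨a₀, ha₀⟩, hsx ⟨a₀, ha₀⟩] at e1
      simpa using e1.symm
    have h3' : r * p' + s * r' = 0 := by
      have h0 : a₀ * (r * p' + s * r') = 0 := by linear_combination h3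
      exact (mul_eq_zero.mp h0).resolve_left ha₀0
    have h4' : r * q' + s * s' = 1 := by
      have h0 : a₀ * (r * q' + s * s' - 1) = 0 := by linear_combination h4
      have := (mul_eq_zero.mp h0).resolve_left ha₀0
      linear_combination this
    set δ : k := p * s - q * r with hδdef
    set δ' : k := p' * s' - q' * r' with hδ'def
    have hδδ' : δ * δ' = 1 := by
      rw [hδdef, hδ'def]
      linear_combination (r * q' + s * s') * h1 + h4' + (-(r * p' + s * r')) * h2
    have hδ0 : δ ≠ 0 := by
      intro h0
      rw [h0, zero_mul] at hδδ'
      exact zero_ne_one hδδ'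
    have hδA : ∀ x ∈ A, δ * x ∈ B := by
      intro x hx
      have hsb : s * x ∈ B := by
        rw [← hsx ⟨x, hx⟩]
        exact ((φ ((0 : 𝓞 k), ⟨x, hx⟩)).2).2
      have hqB : q ∈ B := by rw [hq]; exact ((φ ((1 : 𝓞 k), (0 : A))).2).2
      have t1 : p * (s * x) ∈ B := by
        have := B.smul_mem ((φ ((1 : 𝓞 k), (0 : A))).1) hsb
        rwa [Algebra.smul_def, ← hp] at this
      have t2 : (r * x) * q ∈ B := by
        have := B.smul_mem ((φ ((0 : 𝓞 k), ⟨x, hx⟩)).1) hqB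
        rwa [Algebra.smul_def, hrx ⟨x, hx⟩] at this
      have heq : δ * x = p * (s * x) - (r * x) * q := by rw [hδdef]; ring
      rw [heq]
      exact Submodule.sub_mem B t1 t2
    have hδ'B : ∀ y ∈ B, δ' * y ∈ A := by
      intro y hy
      have hsb : s' * y ∈ A := by
        rw [← hsx' ⟨y, hy⟩]
        exact ((ψ ((0 : 𝓞 k), ⟨y, hy⟩)).2).2
      have hqA : q' ∈ A := by rw [hq']; exact ((ψ ((1 : 𝓞 k), (0 : B))).2).2
      have t1 : p' * (s' * y) ∈ A := by
        have := A.smul_mem ((ψ ((1 : 𝓞 k), (0 : B))).1) hsb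
        rwa [Algebra.smul_def, ← hp'] at this
      have t2 : (r' * y) * q' ∈ A := by
        have := A.smul_mem ((ψ ((0 : 𝓞 k), ⟨y, hy⟩)).1) hqA
        rwa [Algebra.smul_def, hrx' ⟨y, hy⟩] at this
      have heq : δ' * y = p' * (s' * y) - (r' * y) * q' := by rw [hδ'def]; ring
      rw [heq]
      exact Submodule.sub_mem A t1 t2
    have hspan : spanSingleton (𝓞 k)⁰ δ * (𝔞 : FractionalIdeal (𝓞 k)⁰ k) = 𝔟 := by
      apply le_antisymm
      · rw [mul_le]
        intro i hi j hj
        obtain ⟨z, hz⟩ := (mem_spanSingleton _).mp hi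
        rw [← hz, smul_mul_assoc]
        have hb : δ * j ∈ B := hδA j (mem_coe.mpr hj)
        exact mem_coe.mp (Submodule.smul_mem B z hb)
      · intro y hy
        have h5 : δ' * y ∈ A := hδ'B y (mem_coe.mpr hy)
        have heq : δ * (δ' * y) = y := by rw [← mul_assoc, hδδ', one_mul]
        rw [← heq]
        exact mul_mem_mul (mem_spanSingleton_self _ δ) (mem_coe.mp h5)
    exact cg_of_span 𝔞 𝔟 δ hδ0 hspan
  · intro h
    obtain ⟨c, hc0, hspan⟩ := span_of_cg 𝔞 𝔟 h
    obtain ⟨hnormeq, hnormpos⟩ := quad_main k hk2 σ hσ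
    have hcpos : 0 < Algebra.norm ℚ c := hnormpos him c hc0
    have hspan' : spanSingleton (𝓞 k)⁰ c⁻¹ * (𝔟 : FractionalIdeal (𝓞 k)⁰ k) = 𝔞 := by
      rw [← hspan, ← mul_assoc, spanSingleton_mul_spanSingleton, inv_mul_cancel₀ hc0,
        spanSingleton_one, one_mul]
    have hAB : ∀ x : ((𝔞 : FractionalIdeal (𝓞 k)⁰ k) : Submodule (𝓞 k) k),
        c * (x : k) ∈ ((𝔟 : FractionalIdeal (𝓞 k)⁰ k) : Submodule (𝓞 k) k) := by
      intro x
      rw [mem_coe, ← hspan]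
      exact mul_mem_mul (mem_spanSingleton_self _ c) (mem_coe.mp x.2)
    have hBA : ∀ y : ((𝔟 : FractionalIdeal (𝓞 k)⁰ k) : Submodule (𝓞 k) k),
        c⁻¹ * (y : k) ∈ ((𝔞 : FractionalIdeal (𝓞 k)⁰ k) : Submodule (𝓞 k) k) := by
      intro y
      rw [mem_coe, ← hspan']
      exact mul_mem_mul (mem_spanSingleton_self _ c⁻¹) (mem_coe.mp y.2)
    let Fc : ((𝔞 : FractionalIdeal (𝓞 k)⁰ k) : Submodule (𝓞 k) k) →ₗ[𝓞 k]
        ((𝔟 : FractionalIdeal (𝓞 k)⁰ k) : Submodule (𝓞 k) k) :=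
      { toFun := fun x => ⟨c * x, hAB x⟩
        map_add' := fun x y => Subtype.ext (by push_cast; ring)
        map_smul' := fun o x => Subtype.ext (by
          push_cast
          rw [Algebra.smul_def, Algebra.smul_def, id_eq]
          ring) }
    let Gc : ((𝔟 : FractionalIdeal (𝓞 k)⁰ k) : Submodule (𝓞 k) k) →ₗ[𝓞 k]
        ((𝔞 : FractionalIdeal (𝓞 k)⁰ k) : Submodule (𝓞 k) k) :=
      { toFun := fun y => ⟨c⁻¹ * y, hBA y⟩
        map_add' := fun x y => Subtype.ext (by push_cast; ring)
        map_smul' := fun o x => Subtype.ext (by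
          push_cast
          rw [Algebra.smul_def, Algebra.smul_def, id_eq]
          ring) }
    have hFG : Fc.comp Gc = LinearMap.id := by
      apply LinearMap.ext
      intro y
      apply Subtype.ext
      show c * (c⁻¹ * (y : k)) = (y : k)
      field_simp
    have hGF : Gc.comp Fc = LinearMap.id := by
      apply LinearMap.ext
      intro x
      apply Subtype.ext
      show c⁻¹ * (c * (x : k)) = (x : k)
      field_simp
    let φ2 : ((𝔞 : FractionalIdeal (𝓞 k)⁰ k) : Submodule (𝓞 k) k) ≃ₗ[𝓞 k]
        ((𝔟 : FractionalIdeal (𝓞 k)⁰ k) : Submodule (𝓞 k) k) :=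
      LinearEquiv.ofLinear Fc Gc hFG hGF
    refine ⟨(LinearEquiv.refl (𝓞 k) (𝓞 k)).prodCongr φ2, ?_⟩
    intro x y
    have hNb : absNorm ((𝔟 : FractionalIdeal (𝓞 k)⁰ k)) =
        Algebra.norm ℚ c * absNorm ((𝔞 : FractionalIdeal (𝓞 k)⁰ k)) := by
      rw [← hspan, _root_.map_mul, absNorm_span_singleton, abs_of_pos hcpos]
    have hNa0 : absNorm ((𝔞 : FractionalIdeal (𝓞 k)⁰ k)) ≠ 0 := by
      rw [ne_eq, absNorm_eq_zero_iff]
      exact Units.ne_zero 𝔞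
    have hN0 : algebraMap ℚ k (absNorm ((𝔞 : FractionalIdeal (𝓞 k)⁰ k))) ≠ 0 := by
      rw [ne_eq, map_eq_zero]
      exact hNa0
    have hσc : σ c ≠ 0 := fun hh => hc0 (σ.injective (by rw [hh, _root_.map_zero]))
    simp only [formA]
    have c1x : (((LinearEquiv.refl (𝓞 k) (𝓞 k)).prodCongr φ2) x).1 = x.1 := rfl
    have c1y : (((LinearEquiv.refl (𝓞 k) (𝓞 k)).prodCongr φ2) y).1 = y.1 := rfl
    have c2x : ((((LinearEquiv.refl (𝓞 k) (𝓞 k)).prodCongr φ2) x).2 : k) = c * (x.2 : k) := rfl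
    have c2y : ((((LinearEquiv.refl (𝓞 k) (𝓞 k)).prodCongr φ2) y).2 : k) = c * (y.2 : k) := rfl
    rw [c1x, c1y, c2x, c2y, hNb, _root_.map_mul (algebraMap ℚ k), hnormeq c, _root_.map_mul σ c]
    congr 1
    field_simp
end

section
/- Let p be a prime number and let A ⊆ M₂(𝔽_p) be an 𝔽_p-subalgebra (containing the identity matrix) with dim_{𝔽_p} A = 3. Then there exists g ∈ GL₂(𝔽_p) such that g·A·g⁻¹ is the algebra of upper triangular matrices in M₂(𝔽_p). -/
open Matrix

set_option synthInstance.maxHeartbeats 1000000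
set_option maxHeartbeats 1000000

/-- Every 3-dimensional subspace that is a subalgebra is the kernel of `x ↦ trace (m * x)`
for some nonzero matrix `m`. -/
private theorem st15_exists_dual {K : Type*} [Field K]
    (A : Subalgebra K (Matrix (Fin 2) (Fin 2) K))
    (hA : Module.finrank K A = 3) :
    ∃ m : Matrix (Fin 2) (Fin 2) K, m ≠ 0 ∧
      ∀ x : Matrix (Fin 2) (Fin 2) K, x ∈ A ↔ trace (m * x) = 0 := by
  classical
  let T : Matrix (Fin 2) (Fin 2) K →ₗ[K] Module.Dual K A :=
    { toFun := fun m =>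
        { toFun := fun x => trace (m * (x : Matrix (Fin 2) (Fin 2) K))
          map_add' := by intro x y; simp [mul_add]
          map_smul' := by intro c x; simp [Algebra.mul_smul_comm] }
      map_add' := by intro m n; ext x; simp [add_mul]
      map_smul' := by intro c m; ext x; simp [smul_mul_assoc] }
  have hV : Module.finrank K (Matrix (Fin 2) (Fin 2) K) = 4 := by
    simp [Module.finrank_matrix]
  have hdual : Module.finrank K (Module.Dual K A) = 3 := by
    rw [Subspace.dual_finrank_eq]; exact hA
  have hrk := LinearMap.finrank_range_add_finrank_ker T
  have hle : Module.finrank K (LinearMap.range T) ≤ 3 := by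
    rw [← hdual]; exact Submodule.finrank_le _
  have hker : LinearMap.ker T ≠ ⊥ := by
    intro h
    rw [h] at hrk
    simp [hV] at hrk
    omega
  obtain ⟨m, hmker, hm0⟩ := Submodule.exists_mem_ne_zero_of_ne_bot hker
  have hmA : ∀ x : A, trace (m * (x : Matrix (Fin 2) (Fin 2) K)) = 0 := by
    intro x
    have := LinearMap.mem_ker.mp hmker
    simpa [T] using DFunLike.congr_fun this x
  let φ : Matrix (Fin 2) (Fin 2) K →ₗ[K] K :=
    { toFun := fun x => trace (m * x)
      map_add' := by intro x y; simp [mul_add]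
      map_smul' := by intro c x; simp [Algebra.mul_smul_comm] }
  have hentry : ∀ i j, trace (m * Matrix.single j i (1:K)) = m i j := by
    intro i j
    fin_cases i <;> fin_cases j <;>
      simp [trace_fin_two, mul_apply, Matrix.single, Fin.sum_univ_two]
  have hφ : φ ≠ 0 := by
    intro h
    apply hm0
    ext i j
    have := DFunLike.congr_fun h (Matrix.single j i (1:K))
    simp only [φ, LinearMap.coe_mk, AddHom.coe_mk, LinearMap.zero_apply] at this
    rw [hentry i j] at this
    simpa using this
  have hrange : Module.finrank K (LinearMap.range φ) = 1 := by
    have h1 : Module.finrank K (LinearMap.range φ) ≤ 1 := by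
      have := Submodule.finrank_le (LinearMap.range φ)
      simpa using this
    have h2 : LinearMap.range φ ≠ ⊥ := by
      intro h
      exact hφ (LinearMap.range_eq_bot.mp h)
    have h3 : Module.finrank K (LinearMap.range φ) ≠ 0 := by
      intro h
      exact h2 (Submodule.finrank_eq_zero.mp h)
    omega
  have hkerφ : Module.finrank K (LinearMap.ker φ) = 3 := by
    have := LinearMap.finrank_range_add_finrank_ker φ
    rw [hV, hrange] at this
    omega
  have hAle : Subalgebra.toSubmodule A ≤ LinearMap.ker φ := by
    intro x hx
    exact LinearMap.mem_ker.mpr (hmA ⟨x, hx⟩)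
  have hAeq : Subalgebra.toSubmodule A = LinearMap.ker φ := by
    apply Submodule.eq_of_le_of_finrank_eq hAle
    rw [hkerφ]
    simpa using hA
  refine ⟨m, hm0, fun x => ?_⟩
  constructor
  · intro hx
    exact hmA ⟨x, hx⟩
  · intro hx
    have : x ∈ LinearMap.ker φ := LinearMap.mem_ker.mpr hx
    rw [← hAeq] at this
    exact this

/-- The structural properties of `m`: trace zero and zero "determinant". -/
private theorem st15_m_props {K : Type*} [Field K]
    (A : Subalgebra K (Matrix (Fin 2) (Fin 2) K))
    (m : Matrix (Fin 2) (Fin 2) K)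
    (hker : ∀ x : Matrix (Fin 2) (Fin 2) K, x ∈ A ↔ trace (m * x) = 0) :
    m 0 0 + m 1 1 = 0 ∧ m 0 0 ^ 2 + m 0 1 * m 1 0 = 0 := by
  set a := m 0 0 with ha
  set b := m 0 1 with hb
  set c := m 1 0 with hc
  set d := m 1 1 with hd
  have htrace : ∀ x : Matrix (Fin 2) (Fin 2) K,
      trace (m * x) = a * x 0 0 + b * x 1 0 + c * x 0 1 + d * x 1 1 := by
    intro x
    simp [trace_fin_two, mul_apply, Fin.sum_univ_two, ha, hb, hc, hd]
    ring
  have htr : a + d = 0 := by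
    have := (hker 1).mp A.one_mem
    rw [htrace] at this
    simpa using this
  have hclose : ∀ x y : Matrix (Fin 2) (Fin 2) K,
      trace (m * x) = 0 → trace (m * y) = 0 → trace (m * (x * y)) = 0 := by
    intro x y hx hy
    exact (hker _).mp (A.mul_mem ((hker x).mpr hx) ((hker y).mpr hy))
  refine ⟨htr, ?_⟩
  have e1 : !![-c, a; 0, 0] * !![-b, 0; a, 0] = !![c*b + a*a, 0; 0, 0] := by
    ext i j; fin_cases i <;> fin_cases j <;> simp [mul_apply, Fin.sum_univ_two]
  have e3 : !![0, b; -c, 0] * !![-b, 0; a, 0] = !![a*b, 0; c*b, 0] := by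
    ext i j; fin_cases i <;> fin_cases j <;> simp [mul_apply, Fin.sum_univ_two] <;> ring
  have hx1 : trace (m * !![-c, a; 0, 0]) = 0 := by rw [htrace]; simp; ring
  have hx2 : trace (m * !![-b, 0; a, 0]) = 0 := by rw [htrace]; simp; ring
  have hx3 : trace (m * !![0, b; -c, 0]) = 0 := by rw [htrace]; simp; ring
  have h1 := hclose _ _ hx1 hx2
  have h3 := hclose _ _ hx3 hx2
  rw [e1, htrace] at h1
  rw [e3, htrace] at h3
  simp at h1 h3
  rcases h1 with h1 | h1
  · have hb3 : b * (c * b) = 0 := by linear_combination h3 - (a*b)*h1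
    rcases mul_eq_zero.mp hb3 with hb0 | hcb
    · linear_combination c*hb0 + a*h1
    · linear_combination hcb + a*h1
  · linear_combination h1

/-- The main statement over a general field. -/
private theorem st15_main {K : Type*} [Field K]
    (A : Subalgebra K (Matrix (Fin 2) (Fin 2) K))
    (hA : Module.finrank K A = 3) :
    ∃ g : GL (Fin 2) K,
      (fun x => (g : Matrix (Fin 2) (Fin 2) K) * x *
          ((g⁻¹ : GL (Fin 2) K) : Matrix (Fin 2) (Fin 2) K)) '' (A : Set _) =
        {x : Matrix (Fin 2) (Fin 2) K | x 1 0 = 0} := by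
  obtain ⟨m, hm0, hker⟩ := st15_exists_dual A hA
  obtain ⟨htr, hD⟩ := st15_m_props A m hker
  have htrace : ∀ x : Matrix (Fin 2) (Fin 2) K,
      trace (m * x) = m 0 0 * x 0 0 + m 0 1 * x 1 0 + m 1 0 * x 0 1 + m 1 1 * x 1 1 := by
    intro x
    simp [trace_fin_two, mul_apply, Fin.sum_univ_two]
    ring
  by_cases hc : m 1 0 = 0
  · -- m is a nonzero multiple of E₀₁, no conjugation needed
    have ha0 : m 0 0 = 0 := by
      have h2 : m 0 0 ^ 2 = 0 := by linear_combination hD - (m 0 1) * hc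
      exact pow_eq_zero_iff (by norm_num) |>.mp h2
    have hd0 : m 1 1 = 0 := by linear_combination htr - ha0
    have hb : m 0 1 ≠ 0 := by
      intro h
      apply hm0
      ext i j
      fin_cases i <;> fin_cases j <;> simp [ha0, h, hc, hd0]
    refine ⟨1, ?_⟩
    ext y
    simp only [Set.mem_image, Set.mem_setOf_eq, inv_one, Units.val_one, one_mul, mul_one,
      SetLike.mem_coe]
    constructor
    · rintro ⟨x, hx, rfl⟩
      have := (hker x).mp hx
      rw [htrace] at this
      rw [ha0, hd0, hc] at this
      have : m 0 1 * x 1 0 = 0 := by linear_combination this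
      rcases mul_eq_zero.mp this with h | h
      · exact absurd h hb
      · exact h
    · intro hy
      refine ⟨y, (hker y).mpr ?_, rfl⟩
      rw [htrace, ha0, hd0, hc, hy]
      ring
  · -- conjugate by P = !![m 0 0, 1; m 1 0, 0]
    set a := m 0 0 with ha
    set c := m 1 0 with hcc
    set P : Matrix (Fin 2) (Fin 2) K := !![a, 1; c, 0] with hP
    set Pinv : Matrix (Fin 2) (Fin 2) K := !![0, c⁻¹; 1, -(a * c⁻¹)] with hPinv
    have hPinvP : Pinv * P = 1 := by
      ext i j
      fin_cases i <;> fin_cases j <;>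
        simp [hP, hPinv, mul_apply, Fin.sum_univ_two, Matrix.one_apply] <;> field_simp <;> ring
    have hPPinv : P * Pinv = 1 := by
      ext i j
      fin_cases i <;> fin_cases j <;>
        simp [hP, hPinv, mul_apply, Fin.sum_univ_two, Matrix.one_apply] <;> field_simp
    have hkey : ∀ x : Matrix (Fin 2) (Fin 2) K,
        (Pinv * x * P) 1 0 = trace (m * x) := by
      intro x
      simp [hP, hPinv, mul_apply, Fin.sum_univ_two, trace_fin_two, vecMul, vecHead, vecTail,
        dotProduct]
      field_simp
      ring_nf
      linear_combination -(x 1 0) * hD - (m 1 0 * x 1 1) * htr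
    refine ⟨⟨Pinv, P, hPinvP, hPPinv⟩, ?_⟩
    have hg : ((⟨Pinv, P, hPinvP, hPPinv⟩ : GL (Fin 2) K) : Matrix (Fin 2) (Fin 2) K) = Pinv := rfl
    have hg' : (((⟨Pinv, P, hPinvP, hPPinv⟩ : GL (Fin 2) K)⁻¹ : GL (Fin 2) K) :
        Matrix (Fin 2) (Fin 2) K) = P := rfl
    rw [hg, hg']
    ext y
    simp only [Set.mem_image, Set.mem_setOf_eq, SetLike.mem_coe]
    constructor
    · rintro ⟨x, hx, rfl⟩
      rw [hkey]
      exact (hker x).mp hx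
    · intro hy
      refine ⟨P * y * Pinv, (hker _).mpr ?_, ?_⟩
      · rw [← hkey]
        have : Pinv * (P * y * Pinv) * P = y := by
          calc Pinv * (P * y * Pinv) * P = (Pinv * P) * (y * (Pinv * P)) := by
                simp only [mul_assoc]
            _ = y := by rw [hPinvP]; simp
        rw [this]
        exact hy
      · calc Pinv * (P * y * Pinv) * P = (Pinv * P) * (y * (Pinv * P)) := by
              simp only [mul_assoc]
          _ = y := by rw [hPinvP]; simp

theorem statement15
    (p : ℕ) [Fact p.Prime]
    (A : Subalgebra (ZMod p) (Matrix (Fin 2) (Fin 2) (ZMod p)))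
    (hA : Module.finrank (ZMod p) A = 3) :
    ∃ g : GL (Fin 2) (ZMod p),
      (fun x => (g : Matrix (Fin 2) (Fin 2) (ZMod p)) * x *
          ((g⁻¹ : GL (Fin 2) (ZMod p)) : Matrix (Fin 2) (Fin 2) (ZMod p))) '' (A : Set _) =
        {x : Matrix (Fin 2) (Fin 2) (ZMod p) | x 1 0 = 0} := by
  exact st15_main A hA
end

section
/- Let p be a prime number. No semisimple 𝔽_p-algebra of dimension 3 embeds as a unital 𝔽_p-subalgebra into M₂(𝔽_p); equivalently, every 3-dimensional unital 𝔽_p-subalgebra A ⊆ M₂(𝔽_p) has nonzero Jacobson radical. -/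
theorem aux_mem_jac {R : Type*} [Ring R] (z : R) (h : ∀ y, z * y * z = 0) :
    z ∈ Ideal.jacobson (⊥ : Ideal R) := by
  rw [Ideal.jacobson, Ideal.mem_sInf]
  rintro J ⟨-, hJ⟩
  by_contra hzJ
  have hlt : J < J ⊔ Submodule.span R {z} := by
    refine lt_of_le_of_ne le_sup_left (fun hEq => hzJ ?_)
    rw [hEq]
    exact Submodule.mem_sup_right (Submodule.mem_span_singleton_self z)
  have htop : J ⊔ Submodule.span R {z} = ⊤ := (Ideal.isMaximal_def.mp hJ).2 _ hlt
  obtain ⟨m, hm, s, hs, h1⟩ := Submodule.mem_sup.mp (htop ▸ Submodule.mem_top : (1:R) ∈ _)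
  obtain ⟨a, ha⟩ := Submodule.mem_span_singleton.mp hs
  set w := a * z with hw
  have h' : z * (a * z) = 0 := by rw [← mul_assoc]; exact h a
  have hw2 : w * w = 0 := by
    have : w * w = a * (z * (a * z)) := by simp only [hw, mul_assoc]
    rw [this, h', mul_zero]
  have hmw : m = 1 - w := by rw [← h1, ← ha]; simp [smul_eq_mul, hw]
  have hprod : (1 + w) * m = 1 := by
    rw [hmw]
    have : (1 + w) * (1 - w) = 1 - w * w := by noncomm_ring
    rw [this, hw2, sub_zero]
  have hone : (1 : R) ∈ J := by
    have hJ1 : (1 + w) * m ∈ J := by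
      simpa [smul_eq_mul] using Submodule.smul_mem J (1 + w) hm
    rwa [hprod] at hJ1
  exact hJ.ne_top (Ideal.eq_top_of_isUnit_mem _ hone isUnit_one)

theorem aux_jac_ne_bot {R : Type*} [Ring R] (z : R) (hz : z ≠ 0)
    (h : ∀ y, z * y * z = 0) : Ideal.jacobson (⊥ : Ideal R) ≠ ⊥ := by
  intro hEq
  have hmem := aux_mem_jac z h
  rw [hEq] at hmem
  exact hz (by simpa using hmem)

theorem my_jacobson_bot (R : Type*) [Ring R] [IsSemisimpleRing R] :
    Ideal.jacobson (⊥ : Ideal R) = ⊥ := by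
  rw [eq_bot_iff]
  intro x hx
  obtain ⟨C, hdis, hcodis⟩ := exists_isCompl (Submodule.span R {x} : Ideal R)
  obtain ⟨e, he, c, hc, h1⟩ := Submodule.mem_sup.mp
    (by rw [hcodis.eq_top]; trivial : (1:R) ∈ (Submodule.span R {x} : Ideal R) ⊔ C)
  have hsum : x * e + x * c = x := by
    have := congrArg (fun t => x * t) h1
    simpa [mul_add] using this
  have hxe : x = x * e := by
    have hxc : x * c ∈ (Submodule.span R {x} : Ideal R) ⊓ C :=
      ⟨by rw [eq_sub_of_add_eq' hsum]
          exact sub_mem (Submodule.mem_span_singleton_self x) (Submodule.smul_mem _ x he),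
       Submodule.smul_mem _ x hc⟩
    rw [hdis.eq_bot] at hxc
    have h0 : x * c = 0 := hxc
    rw [h0, add_zero] at hsum
    exact hsum.symm
  obtain ⟨a, ha⟩ := Submodule.mem_span_singleton.mp he
  have hax : a * x = e := by rw [← ha]; rfl
  have hxax : x * (a * x) = x := by rw [hax, ← hxe]
  have heJ : a * x ∈ Ideal.jacobson (⊥ : Ideal R) := by
    simpa [smul_eq_mul] using Submodule.smul_mem (Ideal.jacobson (⊥ : Ideal R)) a hx
  have hee : (a * x) * (a * x) = a * x := by
    have : (a * x) * (a * x) = a * (x * (a * x)) := by simp only [mul_assoc]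
    rw [this, hxax]
  have hinv : ∃ u : R, u * (1 - a * x) = 1 := by
    by_contra hninv
    push_neg at hninv
    have hne : Submodule.span R {1 - a * x} ≠ (⊤ : Ideal R) := by
      intro htop
      obtain ⟨u, hu⟩ := Submodule.mem_span_singleton.mp
        (htop ▸ Submodule.mem_top : (1:R) ∈ Submodule.span R {1 - a * x})
      exact hninv u (by simpa [smul_eq_mul] using hu)
    obtain ⟨M, hM, hle⟩ := Ideal.exists_le_maximal _ hne
    have hxM : a * x ∈ M := by
      have hjac : Ideal.jacobson (⊥ : Ideal R) ≤ M := by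
        rw [Ideal.jacobson]
        exact sInf_le ⟨bot_le, hM⟩
      exact hjac heJ
    have h1M : (1:R) ∈ M := by
      have := M.add_mem (hle (Submodule.mem_span_singleton_self _)) hxM
      simpa using this
    exact hM.ne_top (Ideal.eq_top_of_isUnit_mem _ h1M isUnit_one)
  obtain ⟨u, hu⟩ := hinv
  have hax0 : a * x = 0 := by
    calc a * x = (u * (1 - a * x)) * (a * x) := by rw [hu, one_mul]
    _ = u * ((a*x) - (a*x)*(a*x)) := by noncomm_ring
    _ = 0 := by rw [hee, sub_self, mul_zero]
  have hx0 : x = 0 := by rw [hxe, ← hax, hax0, mul_zero]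
  simpa using hx0


open Module

variable {F : Type*} [Field F]

local notation "V" => Matrix (Fin 2) (Fin 2) F

theorem aux_ch (M : V) : M * M = M.trace • M - M.det • (1 : V) := by
  ext i j
  fin_cases i <;> fin_cases j <;>
    simp [Matrix.mul_apply, Matrix.trace_fin_two, Matrix.det_fin_two,
      Fin.sum_univ_two, Matrix.one_apply] <;> ring

theorem aux_nondeg (z : V) (h : ∀ a : V, (z * a).trace = 0) : z = 0 := by
  ext i j
  have := h (Matrix.single j i 1)
  simp [Matrix.trace_fin_two, Matrix.mul_apply, Matrix.single,
    Fin.sum_univ_two] at this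
  fin_cases i <;> fin_cases j <;> simp_all


theorem key (A : Subalgebra F (Matrix (Fin 2) (Fin 2) F))
    (h3 : Module.finrank F A = 3) :
    Ideal.jacobson (⊥ : Ideal A) ≠ ⊥ := by
  have hV : finrank F V = 4 := by
    rw [Module.finrank_matrix]
    simp
  have h3' : finrank F A.toSubmodule = 3 := h3
  -- the linear map sending z to the functional (a : A) ↦ trace (z * a)
  set T : V →ₗ[F] Module.Dual F V :=
    { toFun := fun z => (Matrix.traceLinearMap (Fin 2) F F) ∘ₗ (LinearMap.mulLeft F z)
      map_add' := by
        intro x y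
        apply LinearMap.ext
        intro v
        simp [add_mul]
      map_smul' := by
        intro c x
        apply LinearMap.ext
        intro v
        simp [Matrix.smul_mul] } with hT
  have hTapp : ∀ z a : V, T z a = (z * a).trace := fun z a => rfl
  set Φ : V →ₗ[F] Module.Dual F A.toSubmodule :=
    (A.toSubmodule.subtype.dualMap) ∘ₗ T with hΦ
  have hΦapp : ∀ (z : V) (a : A.toSubmodule), Φ z a = (z * (a : V)).trace :=
    fun z a => rfl
  have Tinj : Function.Injective T := by
    rw [injective_iff_map_eq_zero]
    intro z hz
    exact aux_nondeg z fun a => by rw [← hTapp z a, hz]; rfl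
  have Tsurj : Function.Surjective T :=
    (LinearMap.injective_iff_surjective_of_finrank_eq_finrank
      (by rw [Subspace.dual_finrank_eq])).mp Tinj
  have Φsurj : Function.Surjective Φ := by
    intro g
    obtain ⟨G, hG⟩ := LinearMap.exists_extend g
    obtain ⟨z, hz⟩ := Tsurj G
    exact ⟨z, by rw [hΦ, LinearMap.comp_apply, hz, LinearMap.dualMap_apply', hG]⟩
  have hkerrank : finrank F (LinearMap.ker Φ) = 1 := by
    have hrn := LinearMap.finrank_range_add_finrank_ker Φ
    rw [LinearMap.range_eq_top.mpr Φsurj, finrank_top, hV,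
      Subspace.dual_finrank_eq, h3'] at hrn
    omega
  -- pick a nonzero z in the kernel
  have hkerne : LinearMap.ker Φ ≠ ⊥ := by
    intro hbot
    rw [hbot, finrank_bot] at hkerrank
    omega
  obtain ⟨z, hzker, hz0⟩ := (Submodule.ne_bot_iff _).mp hkerne
  have hker_tr : ∀ w ∈ LinearMap.ker Φ, ∀ a ∈ A, ((w * a).trace : F) = 0 := by
    intro w hw a ha
    have := LinearMap.congr_fun (LinearMap.mem_ker.mp hw) ⟨a, ha⟩
    simpa [hΦapp] using this
  have hker_mem : ∀ w : V, (∀ a ∈ A, ((w * a).trace : F) = 0) → w ∈ LinearMap.ker Φ := by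
    intro w hw
    rw [LinearMap.mem_ker]
    apply LinearMap.ext
    intro a
    simpa [hΦapp] using hw a a.2
  have hspan : ∀ w ∈ LinearMap.ker Φ, ∃ c : F, w = c • z := by
    have hsp : Submodule.span F {z} = LinearMap.ker Φ :=
      Submodule.eq_of_le_of_finrank_le
        ((Submodule.span_singleton_le_iff_mem _ _).mpr hzker)
        (by rw [hkerrank, finrank_span_singleton hz0])
    intro w hw
    obtain ⟨c, hc⟩ := Submodule.mem_span_singleton.mp (hsp ▸ hw)
    exact ⟨c, hc.symm⟩
  have hmul_right : ∀ a ∈ A, z * a ∈ LinearMap.ker Φ := by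
    intro a ha
    apply hker_mem
    intro b hb
    rw [Matrix.mul_assoc]
    exact hker_tr z hzker _ (mul_mem ha hb)
  have hmul_left : ∀ a ∈ A, a * z ∈ LinearMap.ker Φ := by
    intro a ha
    apply hker_mem
    intro b hb
    rw [Matrix.trace_mul_comm, ← Matrix.mul_assoc, Matrix.trace_mul_comm]
    exact hker_tr z hzker _ (mul_mem hb ha)
  have trz : z.trace = 0 := by
    have := hker_tr z hzker 1 A.one_mem
    simpa using this
  by_cases hzA : z ∈ A
  · -- z belongs to A, z*z = c • z
    obtain ⟨c, hzz⟩ := hspan _ (hmul_right z hzA)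
    by_cases hc : c = 0
    · -- success case: z is a nonzero element with z*y*z = 0 for all y in A
      rw [hc, zero_smul] at hzz
      apply aux_jac_ne_bot (⟨z, hzA⟩ : A)
      · intro hcon
        exact hz0 (by simpa using congrArg Subtype.val hcon)
      · intro y
        obtain ⟨d, hd⟩ := hspan _ (hmul_right y.1 y.2)
        apply Subtype.ext
        show z * y.1 * z = (0 : V)
        rw [hd, Matrix.smul_mul, hzz, smul_zero]
    · -- c ≠ 0 : z is a nonzero scalar matrix, leading to a contradiction
      exfalso
      have hch := aux_ch z
      rw [trz, zero_smul, zero_sub, hzz] at hch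
      -- z = μ • 1 with μ ≠ 0
      set μ : F := -(c⁻¹ * z.det) with hμ
      have hzscal : z = μ • (1 : V) := by
        have := congrArg (fun w => (c⁻¹ : F) • w) hch
        simp only [smul_smul, inv_mul_cancel₀ hc, one_smul, smul_neg] at this
        rw [this, hμ, neg_smul]
      have hμ0 : μ ≠ 0 := by
        intro h0
        rw [h0, zero_smul] at hzscal
        exact hz0 hzscal
      have htrA : ∀ a ∈ A, (Matrix.trace a : F) = 0 := by
        intro a ha
        have := hker_tr z hzker a ha
        rw [hzscal, Matrix.smul_mul, one_mul, Matrix.trace_smul, smul_eq_mul] at this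
        exact (mul_eq_zero.mp this).resolve_left hμ0
      -- trace vanishes on A, so A = ker(trace), but ker(trace) is not closed under mult
      set τ : V →ₗ[F] F := Matrix.traceLinearMap (Fin 2) F F with hτ
      have τsurj : Function.Surjective τ := by
        intro r
        exact ⟨Matrix.single 0 0 r, by
          simp [hτ, Matrix.trace_fin_two, Matrix.single]⟩
      have hkerτ : finrank F (LinearMap.ker τ) = 3 := by
        have hrn := LinearMap.finrank_range_add_finrank_ker τ
        rw [LinearMap.range_eq_top.mpr τsurj, finrank_top, hV, finrank_self] at hrn
        omega
      have hAker : A.toSubmodule = LinearMap.ker τ :=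
        Submodule.eq_of_le_of_finrank_le
          (fun a ha => by simpa [hτ] using htrA a ha)
          (by rw [hkerτ, h3'])
      have hE01 : Matrix.single (0 : Fin 2) 1 (1:F) ∈ A := by
        show _ ∈ A.toSubmodule
        rw [hAker]
        simp [hτ, Matrix.trace_fin_two, Matrix.single]
      have hE10 : Matrix.single (1 : Fin 2) 0 (1:F) ∈ A := by
        show _ ∈ A.toSubmodule
        rw [hAker]
        simp [hτ, Matrix.trace_fin_two, Matrix.single]
      have hE00 : Matrix.single (0 : Fin 2) 0 (1:F) ∈ A := by
        have := mul_mem hE01 hE10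
        rwa [Matrix.single_mul_single_same, one_mul] at this
      have := htrA _ hE00
      rw [Matrix.trace_fin_two] at this
      simp [Matrix.single] at this
  · -- z ∉ A : contradiction
    exfalso
    have hdisj : Disjoint A.toSubmodule (Submodule.span F {z}) :=
      (Submodule.disjoint_span_singleton' hz0).mpr hzA
    have hsup : A.toSubmodule ⊔ Submodule.span F {z} = ⊤ := by
      apply Submodule.eq_top_of_finrank_eq
      have hfr := Submodule.finrank_sup_add_finrank_inf_eq A.toSubmodule (Submodule.span F {z})
      rw [hdisj.eq_bot, finrank_bot, h3', finrank_span_singleton hz0] at hfr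
      rw [hV]
      omega
    have hdec : ∀ v : V, ∃ a ∈ A, ∃ d : F, v = a + d • z := by
      intro v
      have hv : v ∈ A.toSubmodule ⊔ Submodule.span F {z} := by rw [hsup]; trivial
      obtain ⟨a, ha, s, hs, hv⟩ := Submodule.mem_sup.mp hv
      obtain ⟨d, hd⟩ := Submodule.mem_span_singleton.mp hs
      exact ⟨a, ha, d, by rw [← hv, ← hd]⟩
    have ht : ((z * z).trace : F) ≠ 0 := by
      intro ht0
      apply hz0
      apply aux_nondeg
      intro v
      obtain ⟨a, ha, d, rfl⟩ := hdec v
      rw [mul_add, Matrix.trace_add, Matrix.mul_smul, Matrix.trace_smul,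
        hker_tr z hzker a ha, ht0, smul_zero, add_zero]
    have hcommA : ∀ a ∈ A, a * z = z * a := by
      intro a ha
      obtain ⟨f, hf⟩ := hspan _ (hmul_right a ha)
      obtain ⟨g, hg⟩ := hspan _ (hmul_left a ha)
      have h1 : (z * (a * z)).trace = g * (z * z).trace := by
        rw [hg, Matrix.mul_smul, Matrix.trace_smul, smul_eq_mul]
      have h2 : (z * (a * z)).trace = f * (z * z).trace := by
        rw [← Matrix.mul_assoc, hf, Matrix.smul_mul, Matrix.trace_smul, smul_eq_mul]
      have hfg : f = g := mul_right_cancel₀ ht (h2.symm.trans h1)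
      rw [hg, ← hfg, ← hf]
    have hcomm : ∀ v : V, z * v = v * z := by
      intro v
      obtain ⟨a, ha, d, rfl⟩ := hdec v
      rw [mul_add, add_mul, hcommA a ha, Matrix.mul_smul, Matrix.smul_mul]
    have e10 : z 1 0 = 0 := by
      have := congrFun (congrFun (hcomm (Matrix.single 0 1 1)) 1) 1
      simpa [Matrix.mul_apply, Matrix.single, Fin.sum_univ_two] using this
    have ediag : z 0 0 = z 1 1 := by
      have := congrFun (congrFun (hcomm (Matrix.single 0 1 1)) 0) 1
      simpa [Matrix.mul_apply, Matrix.single, Fin.sum_univ_two] using this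
    have e01 : z 0 1 = 0 := by
      have := congrFun (congrFun (hcomm (Matrix.single 1 0 1)) 0) 0
      simpa [Matrix.mul_apply, Matrix.single, Fin.sum_univ_two] using this
    have hzscal : z = z 0 0 • (1 : V) := by
      ext i j
      fin_cases i <;> fin_cases j <;>
        simp [Matrix.one_apply, e10, e01, ediag.symm]
    apply ht
    calc ((z * z).trace : F) = ((z 0 0 • (1:V)) * z).trace := by nth_rewrite 1 [hzscal]; rfl
    _ = z 0 0 * z.trace := by rw [Matrix.smul_mul, one_mul, Matrix.trace_smul, smul_eq_mul]
    _ = 0 := by rw [trz, mul_zero]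


theorem statement16 (p : ℕ) [Fact p.Prime] :
    -- no 3-dimensional semisimple 𝔽_p-algebra embeds into M₂(𝔽_p) ...
    (∀ (S : Type) [Ring S] [Algebra (ZMod p) S], IsSemisimpleRing S →
      Module.finrank (ZMod p) S = 3 →
      ∀ f : S →ₐ[ZMod p] Matrix (Fin 2) (Fin 2) (ZMod p), ¬ Function.Injective f) ∧
    -- ... equivalently, every 3-dimensional subalgebra has nonzero Jacobson radical
    (∀ A : Subalgebra (ZMod p) (Matrix (Fin 2) (Fin 2) (ZMod p)),
      Module.finrank (ZMod p) A = 3 → Ideal.jacobson (⊥ : Ideal A) ≠ ⊥) := by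
  constructor
  · intro S _ _ hss h3 f hf
    have e : S ≃ₐ[ZMod p] f.range := AlgEquiv.ofInjective f hf
    have h3A : Module.finrank (ZMod p) f.range = 3 := by
      rw [← h3]
      exact e.toLinearEquiv.finrank_eq.symm
    haveI : IsSemisimpleRing S := hss
    haveI : IsSemisimpleRing f.range := e.toRingEquiv.isSemisimpleRing
    exact key f.range h3A (my_jacobson_bot f.range)
  · exact fun A h3 => key A h3
end

section
/- Let p be a prime number and let R ⊆ M₂(ℤ_p) be a ℤ_p-subalgebra containing the identity such that the quotient M₂(ℤ_p)/R (as an abelian group) has exactly p elements. Then there exists g ∈ GL₂(ℤ_p) such that g·R·g⁻¹ = { (a b; pc d) : a, b, c, d ∈ ℤ_p }, the standard Eichler order of level p in M₂(ℚ_p). -/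
open Matrix

variable {K : Type*} [Field K]

lemma trace_mul_e01 (z : Matrix (Fin 2) (Fin 2) K) :
    trace (z * !![(0:K),1;0,0]) = z 1 0 := by
  simp [trace_fin_two, mul_apply, Fin.sum_univ_two]

lemma trace_nondeg (z : Matrix (Fin 2) (Fin 2) K)
    (h : ∀ x, trace (x * z) = 0) : z = 0 := by
  have h00 := h !![1,0;0,0]
  have h01 := h !![0,0;1,0]
  have h10 := h !![0,1;0,0]
  have h11 := h !![0,0;0,1]
  simp [trace_fin_two, mul_apply, vecMul, dotProduct, Fin.sum_univ_two] at h00 h01 h10 h11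
  ext i j
  fin_cases i <;> fin_cases j <;> simp [h00, h01, h10, h11]

lemma sq_fin_two (M : Matrix (Fin 2) (Fin 2) K) :
    M * M = trace M • M - det M • 1 := by
  ext i j
  fin_cases i <;> fin_cases j <;>
    simp [mul_apply, Fin.sum_univ_two, trace_fin_two, det_fin_two, one_apply] <;> ring

theorem key_s17 (φ : Matrix (Fin 2) (Fin 2) K →ₗ[K] K)
    (h1 : φ 1 = 0) (hne : φ ≠ 0)
    (hmul : ∀ x y, φ x = 0 → φ y = 0 → φ (x * y) = 0) :
    ∃ h h' : Matrix (Fin 2) (Fin 2) K, h * h' = 1 ∧ h' * h = 1 ∧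
      ∀ x, φ x = (h' * x * h) 1 0 := by
  obtain ⟨M, htr⟩ : ∃ M, ∀ x, trace (x * M) = φ x := by
    refine ⟨!![φ !![1,0;0,0], φ !![0,0;1,0]; φ !![0,1;0,0], φ !![0,0;0,1]], fun x => ?_⟩
    have hdec : x = x 0 0 • !![1,0;0,0] + x 0 1 • !![0,1;0,0] + x 1 0 • !![0,0;1,0]
        + x 1 1 • !![0,0;0,1] := by
      ext i j
      fin_cases i <;> fin_cases j <;> simp
    conv_rhs => rw [hdec]
    simp only [map_add, LinearMap.map_smul, smul_eq_mul]
    simp [trace_fin_two, mul_apply, Fin.sum_univ_two]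
    ring
  have hMtr : trace M = 0 := by
    have := htr 1
    rwa [one_mul, h1] at this
  obtain ⟨x₀, hx₀⟩ : ∃ x, φ x ≠ 0 := by
    by_contra hc
    push_neg at hc
    exact hne (by ext x; simp [hc x])
  obtain ⟨u, hu1⟩ : ∃ u, φ u = 1 :=
    ⟨(φ x₀)⁻¹ • x₀, by simp [LinearMap.map_smul, smul_eq_mul, inv_mul_cancel₀ hx₀]⟩
  have hstar : ∀ x y, φ (x*y)
      = φ x * φ (u*y) + φ y * φ (x*u) - φ x * φ y * φ (u*u) := by
    intro x y
    have hx' : φ (x - φ x • u) = 0 := by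
      simp [map_sub, LinearMap.map_smul, smul_eq_mul, hu1]
    have hy' : φ (y - φ y • u) = 0 := by
      simp [map_sub, LinearMap.map_smul, smul_eq_mul, hu1]
    have h0 := hmul _ _ hx' hy'
    have hexp : (x - φ x • u) * (y - φ y • u)
        = x*y - φ x • (u*y) - φ y • (x*u) + (φ x * φ y) • (u*u) := by
      simp only [sub_mul, mul_sub, smul_mul_assoc, mul_smul_comm, smul_smul, smul_sub]
      rw [mul_comm (φ y) (φ x)]
      abel
    rw [hexp] at h0
    simp only [map_add, map_sub, LinearMap.map_smul, smul_eq_mul] at h0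
    linear_combination h0
  have hN : ∀ y, y * M
      = φ (u*y) • M + φ y • (u*M) - (φ y * φ (u*u)) • M := by
    intro y
    have hz : ∀ x, trace (x * (y*M - (φ (u*y) • M + φ y • (u*M) - (φ y * φ (u*u)) • M))) = 0 := by
      intro x
      have e1 : x * (y*M) = (x*y) * M := (mul_assoc _ _ _).symm
      have e2 : x * (u*M) = (x*u) * M := (mul_assoc _ _ _).symm
      simp only [mul_sub, mul_add, trace_sub, trace_add, mul_smul_comm, trace_smul,
        smul_eq_mul, e1, e2, htr]
      rw [hstar x y]
      ring
    have := trace_nondeg _ hz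
    rw [sub_eq_zero] at this
    exact this
  have hdet : det M = 0 := by
    by_contra hd
    have hinv : M * M⁻¹ = 1 := mul_nonsing_inv M (isUnit_iff_ne_zero.mpr hd)
    have hy : ∀ y : Matrix (Fin 2) (Fin 2) K,
        y = (φ (u*y) - φ y * φ (u*u)) • 1 + φ y • u := by
      intro y
      have h2 : y * (M * M⁻¹) = (φ (u*y) • M + φ y • (u*M) - (φ y * φ (u*u)) • M) * M⁻¹ := by
        rw [← mul_assoc, hN y]
      rw [hinv, mul_one] at h2
      conv_lhs => rw [h2]
      simp only [add_mul, sub_mul, smul_mul_assoc, mul_assoc, hinv, mul_one, sub_smul]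
      abel
    have hcomm : ∀ y z : Matrix (Fin 2) (Fin 2) K, y * z = z * y := by
      intro y z
      rw [hy y, hy z]
      simp only [add_mul, mul_add, smul_mul_assoc, mul_smul_comm, smul_smul, one_mul, mul_one]
      module
    have hco := hcomm !![1,0;0,0] !![0,1;0,0]
    have l1 : (!![1,0;0,0] * !![0,1;0,0] : Matrix (Fin 2) (Fin 2) K) = !![0,1;0,0] := by
      ext i j; fin_cases i <;> fin_cases j <;> simp [mul_apply, Fin.sum_univ_two]
    have l2 : (!![0,1;0,0] * !![1,0;0,0] : Matrix (Fin 2) (Fin 2) K) = 0 := by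
      ext i j; fin_cases i <;> fin_cases j <;> simp [mul_apply, Fin.sum_univ_two]
    rw [l1, l2] at hco
    have := congrFun (congrFun hco 0) 1
    simp at this
  have hM2 : M * M = 0 := by
    rw [sq_fin_two, hMtr, hdet]
    simp
  obtain ⟨i, j, hij⟩ : ∃ i j, M i j ≠ 0 := by
    by_contra hc
    push_neg at hc
    apply hx₀
    rw [← htr x₀]
    have : M = 0 := by ext i j; simpa using hc i j
    rw [this, mul_zero, trace_zero]
  have hMMc : ∀ r s, M r 0 * M 0 s + M r 1 * M 1 s = 0 := by
    intro r s
    have := congrFun (congrFun hM2 r) s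
    simpa [mul_apply, Fin.sum_univ_two] using this
  obtain ⟨h, hdh, hMh⟩ : ∃ h : Matrix (Fin 2) (Fin 2) K,
      IsUnit (det h) ∧ M * h = h * !![0,1;0,0] := by
    fin_cases j
    · refine ⟨!![M 0 0, 1; M 1 0, 0], ?_, ?_⟩
      · rw [isUnit_iff_ne_zero]
        simp only [det_fin_two_of, mul_zero, one_mul, zero_sub, neg_ne_zero]
        intro h10
        have h00 : M 0 0 = 0 := by
          have := hMMc 0 0
          rw [h10] at this
          simpa [mul_self_eq_zero] using this
        fin_cases i <;> simp [h00, h10] at hij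
      · ext r s
        fin_cases r <;> fin_cases s <;>
          simp [mul_apply, Fin.sum_univ_two] <;>
          first
            | linear_combination hMMc 0 0
            | linear_combination hMMc 1 0
            | ring
    · refine ⟨!![M 0 1, 0; M 1 1, 1], ?_, ?_⟩
      · rw [isUnit_iff_ne_zero]
        simp only [det_fin_two_of, mul_one, zero_mul, sub_zero]
        intro h01
        have h11 : M 1 1 = 0 := by
          have := hMMc 1 1
          rw [h01] at this
          simpa [mul_self_eq_zero] using this
        fin_cases i <;> simp [h01, h11] at hij
      · ext r s
        fin_cases r <;> fin_cases s <;>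
          simp [mul_apply, Fin.sum_univ_two] <;>
          first
            | linear_combination hMMc 0 1
            | linear_combination hMMc 1 1
            | ring
  refine ⟨h, h⁻¹, mul_nonsing_inv _ hdh, nonsing_inv_mul _ hdh, fun x => ?_⟩
  have hMeq : M = h * !![0,1;0,0] * h⁻¹ := by
    rw [← hMh, mul_assoc, mul_nonsing_inv _ hdh, mul_one]
  calc φ x = trace (x * M) := (htr x).symm
    _ = trace ((x * (h * !![0,1;0,0])) * h⁻¹) := by rw [hMeq, ← mul_assoc]
    _ = trace (h⁻¹ * (x * (h * !![0,1;0,0]))) := trace_mul_comm _ _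
    _ = trace ((h⁻¹ * x * h) * !![0,1;0,0]) := by
          rw [show h⁻¹ * (x * (h * !![(0:K),1;0,0])) = (h⁻¹ * x * h) * !![0,1;0,0] by
            rw [← mul_assoc x h, ← mul_assoc, ← mul_assoc]]
    _ = (h⁻¹ * x * h) 1 0 := trace_mul_e01 _

set_option maxHeartbeats 1600000 in
theorem statement17
    (p : ℕ) [Fact p.Prime]
    (R : Subalgebra ℤ_[p] (Matrix (Fin 2) (Fin 2) ℤ_[p]))
    (hR : Nat.card
      ((Matrix (Fin 2) (Fin 2) ℤ_[p]) ⧸ (Subalgebra.toSubmodule R)) = p) :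
    ∃ g : GL (Fin 2) ℤ_[p],
      (fun x => (g : Matrix (Fin 2) (Fin 2) ℤ_[p]) * x *
          ((g⁻¹ : GL (Fin 2) ℤ_[p]) : Matrix (Fin 2) (Fin 2) ℤ_[p])) '' (R : Set _) =
        {x : Matrix (Fin 2) (Fin 2) ℤ_[p] | ∃ c : ℤ_[p], x 1 0 = (p : ℤ_[p]) * c} := by
  have hp : p.Prime := Fact.out
  let Mat := Matrix (Fin 2) (Fin 2) ℤ_[p]
  let Q := Mat ⧸ (Subalgebra.toSubmodule R)
  haveI : Finite Q := Nat.finite_of_card_ne_zero (by rw [hR]; exact hp.ne_zero)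
  let π : Mat →+* Matrix (Fin 2) (Fin 2) (ZMod p) := (PadicInt.toZMod).mapMatrix
  have hπ_entry : ∀ (z : Mat) i j, π z i j = PadicInt.toZMod (z i j) := by
    intro z i j
    rfl
  have hR' : Nat.card Q = p := hR
  -- p • x ∈ R
  have hkey : ∀ x : Mat, (p : ℤ_[p]) • x ∈ R := by
    intro x
    have h : (Nat.card Q) • (Submodule.Quotient.mk x : Q) = 0 := card_nsmul_eq_zero'
    rw [hR'] at h
    have h0 : ((p : ℤ_[p]) • (Submodule.Quotient.mk x : Q)) = 0 := by
      rw [Nat.cast_smul_eq_nsmul]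
      exact h
    rw [← Submodule.Quotient.mk_smul] at h0
    exact (Submodule.Quotient.mk_eq_zero _).mp h0
  -- toZMod z = 0 ↔ ∃ c, z = p * c
  have hz0 : ∀ z : ℤ_[p], PadicInt.toZMod z = 0 ↔ ∃ c, z = (p : ℤ_[p]) * c := by
    intro z
    constructor
    · intro hz
      have : z ∈ RingHom.ker (PadicInt.toZMod : ℤ_[p] →+* ZMod p) := hz
      rw [PadicInt.ker_toZMod, PadicInt.maximalIdeal_eq_span_p,
        Ideal.mem_span_singleton] at this
      obtain ⟨c, hc⟩ := this
      exact ⟨c, hc⟩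
    · rintro ⟨c, rfl⟩
      simp
  -- kernel of π is contained in R
  have hker : ∀ x : Mat, π x = 0 → x ∈ R := by
    intro x hx
    have hdvd : ∀ i j, ∃ c, x i j = (p : ℤ_[p]) * c := by
      intro i j
      apply (hz0 _).mp
      rw [← hπ_entry x i j, hx]
      rfl
    choose c hc using hdvd
    have hxe : x = (p : ℤ_[p]) • (Matrix.of c) := by
      ext i j
      simp [hc i j, Matrix.smul_apply, smul_eq_mul]
    rw [hxe]
    exact hkey _
  -- R is proper
  obtain ⟨z₀, hz₀⟩ : ∃ z : Mat, z ∉ R := by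
    by_contra hc
    push_neg at hc
    have htop : Subalgebra.toSubmodule R = ⊤ := by
      rw [eq_top_iff]
      intro z _
      exact hc z
    have : Subsingleton Q := (Submodule.Quotient.subsingleton_iff).mpr htop
    have h1 : Nat.card Q = 1 := Nat.card_eq_one_iff_unique.mpr ⟨this, ⟨0⟩⟩
    rw [hR] at h1
    exact hp.one_lt.ne' h1
  -- equiv of the quotient with ZMod p
  have hcyc : IsAddCyclic Q := isAddCyclic_of_prime_card hR
  let e : Q ≃+ ZMod p := (zmodAddCyclicAddEquiv hcyc).symm.trans
    (by rw [hR'])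
  -- section
  let S : Matrix (Fin 2) (Fin 2) (ZMod p) → Mat :=
    fun m => Matrix.of (fun i j => ((m i j).val : ℤ_[p]))
  have hS : ∀ m, π (S m) = m := by
    intro m
    ext i j
    rw [hπ_entry]
    simp only [S, Matrix.of_apply]
    rw [map_natCast]
    exact ZMod.natCast_rightInverse (m i j)
  have hπs : Function.Surjective π := fun m => ⟨S m, hS m⟩
  -- the functional
  let φ₀ : Matrix (Fin 2) (Fin 2) (ZMod p) → ZMod p :=
    fun m => e (Submodule.Quotient.mk (S m))
  have hlift : ∀ z : Mat, φ₀ (π z) = e (Submodule.Quotient.mk z) := by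
    intro z
    have : S (π z) - z ∈ R := by
      apply hker
      rw [_root_.map_sub, hS]
      simp
    have hmk : (Submodule.Quotient.mk (S (π z)) : Q) = Submodule.Quotient.mk z :=
      (Submodule.Quotient.eq _).mpr this
    simp only [φ₀, hmk]
  have hmem0 : ∀ z : Mat, φ₀ (π z) = 0 ↔ z ∈ R := by
    intro z
    rw [hlift]
    rw [AddEquivClass.map_eq_zero_iff]
    exact Submodule.Quotient.mk_eq_zero _
  have hadd : ∀ m m', φ₀ (m + m') = φ₀ m + φ₀ m' := by
    intro m m'
    have h1 : m + m' = π (S m + S m') := by rw [map_add, hS, hS]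
    rw [h1, hlift]
    show e (Submodule.Quotient.mk (S m + S m')) = e (Submodule.Quotient.mk (S m)) +
      e (Submodule.Quotient.mk (S m'))
    rw [Submodule.Quotient.mk_add, map_add]
  let φ₁ : Matrix (Fin 2) (Fin 2) (ZMod p) →+ ZMod p :=
    { toFun := φ₀
      map_zero' := by
        have : (0 : Matrix (Fin 2) (Fin 2) (ZMod p)) = π 0 := by rw [_root_.map_zero]
        rw [this, hmem0]
        exact zero_mem R
      map_add' := hadd }
  let φ : Matrix (Fin 2) (Fin 2) (ZMod p) →ₗ[ZMod p] ZMod p :=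
    { toFun := φ₀
      map_add' := hadd
      map_smul' := by
        intro c x
        obtain ⟨n, rfl⟩ := ZMod.natCast_rightInverse.surjective c
        show φ₀ ((n : ZMod p) • x) = (n : ZMod p) * φ₀ x
        rw [Nat.cast_smul_eq_nsmul]
        have h2 : φ₀ (n • x) = n • φ₀ x := map_nsmul φ₁ n x
        rw [h2, nsmul_eq_mul] }
  have hφ_eq : ∀ m, φ m = φ₀ m := fun m => rfl
  have hφ1 : φ 1 = 0 := by
    rw [hφ_eq]
    have : (1 : Matrix (Fin 2) (Fin 2) (ZMod p)) = π 1 := by rw [_root_.map_one]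
    rw [this, hmem0]
    exact one_mem R
  have hφne : φ ≠ 0 := by
    intro hc
    apply hz₀
    rw [← hmem0 z₀, ← hφ_eq, hc]
    rfl
  have hφmul : ∀ x y, φ x = 0 → φ y = 0 → φ (x * y) = 0 := by
    intro x y hx hy
    rw [hφ_eq] at hx hy ⊢
    have hx' : S x ∈ R := by rw [← hmem0 (S x), hS]; exact hx
    have hy' : S y ∈ R := by rw [← hmem0 (S y), hS]; exact hy
    have hxy : S x * S y ∈ R := mul_mem hx' hy'
    have h1 : x * y = π (S x * S y) := by rw [_root_.map_mul, hS, hS]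
    rw [h1, hmem0]
    exact hxy
  obtain ⟨h, h', hhh', hh'h, hφtr⟩ := key_s17 φ hφ1 hφne hφmul
  have hdet' : det h' ≠ 0 := by
    intro h0
    have hd := congrArg det hh'h
    rw [det_mul, h0, zero_mul, det_one] at hd
    exact zero_ne_one hd
  set H : Mat := S h' with hH
  have hπH : π H = h' := hS h'
  have hdetH : IsUnit H.det := by
    by_contra hc
    have hlt : ‖H.det‖ < 1 := PadicInt.not_isUnit_iff.mp hc
    obtain ⟨c, hc'⟩ := (PadicInt.norm_lt_one_iff_dvd _).mp hlt
    have h0 : PadicInt.toZMod H.det = 0 := by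
      rw [hc', _root_.map_mul]
      simp
    apply hdet'
    rw [RingHom.map_det, hπH] at h0
    exact h0
  have hunit : IsUnit H := (Matrix.isUnit_iff_isUnit_det _).mpr hdetH
  let G : GL (Fin 2) ℤ_[p] := hunit.unit
  have hGco : (↑G : Mat) = H := hunit.unit_spec
  have hVU : (↑G⁻¹ : Mat) * (↑G : Mat) = 1 := G.inv_mul
  have hUV : (↑G : Mat) * (↑G⁻¹ : Mat) = 1 := G.mul_inv
  have hπG : π (↑G : Mat) = h' := by rw [hGco]; exact hπH
  have hπGinv : π (↑G⁻¹ : Mat) = h := by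
    have e1 : π (↑G⁻¹ : Mat) * h' = 1 := by
      rw [← hπG, ← _root_.map_mul, hVU, _root_.map_one]
    calc π (↑G⁻¹ : Mat) = π (↑G⁻¹ : Mat) * (h' * h) := by rw [hh'h, mul_one]
      _ = (π (↑G⁻¹ : Mat) * h') * h := by rw [mul_assoc]
      _ = h := by rw [e1, one_mul]
  refine ⟨G, ?_⟩
  ext x
  simp only [Set.mem_image, SetLike.mem_coe, Set.mem_setOf_eq]
  constructor
  · rintro ⟨r, hr, rfl⟩
    apply (hz0 _).mp
    rw [← hπ_entry]
    have hπr : π ((↑G : Mat) * r * (↑G⁻¹ : Mat)) = h' * π r * h := by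
      rw [_root_.map_mul, _root_.map_mul, hπG, hπGinv]
    rw [hπr, ← hφtr (π r), hφ_eq, hmem0]
    exact hr
  · rintro ⟨c, hc⟩
    refine ⟨(↑G⁻¹ : Mat) * x * (↑G : Mat), ?_, ?_⟩
    · have hπz : π ((↑G⁻¹ : Mat) * x * (↑G : Mat)) = h * π x * h' := by
        rw [_root_.map_mul, _root_.map_mul, hπG, hπGinv]
      rw [← hmem0, hπz, ← hφ_eq, hφtr]
      have hsand : h' * (h * π x * h') * h = (h' * h) * π x * (h' * h) := by
        noncomm_ring
      rw [hsand, hh'h, one_mul, mul_one]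
      rw [hπ_entry, hc, _root_.map_mul]
      simp
    · show (↑G : Mat) * ((↑G⁻¹ : Mat) * x * (↑G : Mat)) * (↑G⁻¹ : Mat) = x
      have hs : (↑G : Mat) * ((↑G⁻¹ : Mat) * x * (↑G : Mat)) * (↑G⁻¹ : Mat)
          = ((↑G : Mat) * (↑G⁻¹ : Mat)) * x * ((↑G : Mat) * (↑G⁻¹ : Mat)) := by
        noncomm_ring
      rw [hs, hUV, one_mul, mul_one]
end
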